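/- arXiv:1703.02526 — 2 statements merged into one kernel-verified Lean document; each statement's English description precedes it below -/
import Mathlib

section
/- If E is a bounded subset of ℝ^d with upper box dimension \overline{dim}_B E = 0, then its quasi-Assouad dimension is also zero: dim_qA E = 0. -/
open Metric Filter Set
open scoped ENNReal

/-- `N_r(A)`: the least number of closed balls of radius `r` needed to cover `A`. -/
noncomputable def coverNum {X : Type*} [PseudoMetricSpace X] (A : Set X) (r : ℝ) : ℕ :=
  sInf {n : ℕ | ∃ S : Finset X, S.card = n ∧ A ⊆ ⋃ x ∈ S, closedBall x r}

/-- `N_{r,R}(E) = sup_{x ∈ E} N_r(E ∩ B(x,R))`. -/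
noncomputable def coverNumLoc {X : Type*} [PseudoMetricSpace X] (E : Set X) (r R : ℝ) : ℕ :=
  sSup {n : ℕ | ∃ x ∈ E, n = coverNum (E ∩ closedBall x R) r}

/-- Upper box dimension `limsup_{r → 0⁺} log N_r(E) / log (1/r)`. -/
noncomputable def upperBoxDim {X : Type*} [PseudoMetricSpace X] (E : Set X) : ℝ :=
  limsup (fun r : ℝ => Real.log (coverNum E r) / Real.log (1 / r)) (nhdsWithin 0 (Ioi 0))

/-- Lower box dimension `liminf_{r → 0⁺} log N_r(E) / log (1/r)`. -/
noncomputable def lowerBoxDim {X : Type*} [PseudoMetricSpace X] (E : Set X) : ℝ :=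
  liminf (fun r : ℝ => Real.log (coverNum E r) / Real.log (1 / r)) (nhdsWithin 0 (Ioi 0))

/-- `h̄_E(δ)`: the infimum of all `α ≥ 0` such that for some `b, c > 0`,
`N_{r,R}(E) ≤ c (R/r)^α` whenever `0 < r ≤ R^{1+δ} ≤ R ≤ b`. -/
noncomputable def hUpper {X : Type*} [PseudoMetricSpace X] (E : Set X) (δ : ℝ) : ℝ :=
  sInf {α : ℝ | 0 ≤ α ∧ ∃ b c : ℝ, 0 < b ∧ 0 < c ∧ ∀ r R : ℝ,
    0 < r → r ≤ R ^ (1 + δ) → R ^ (1 + δ) ≤ R → R ≤ b →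
    (coverNumLoc E r R : ℝ) ≤ c * (R / r) ^ α}

/-- `h̲_E(δ)`: the supremum of all `α ≥ 0` such that for some `b, c > 0`,
`N_{r,R}(E) ≥ c (R/r)^α` whenever `0 < r ≤ R^{1+δ} ≤ R ≤ b`. -/
noncomputable def hLower {X : Type*} [PseudoMetricSpace X] (E : Set X) (δ : ℝ) : ℝ :=
  sSup {α : ℝ | 0 ≤ α ∧ ∃ b c : ℝ, 0 < b ∧ 0 < c ∧ ∀ r R : ℝ,
    0 < r → r ≤ R ^ (1 + δ) → R ^ (1 + δ) ≤ R → R ≤ b →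
    c * (R / r) ^ α ≤ (coverNumLoc E r R : ℝ)}

/-- The quasi-Assouad dimension `dim_qA E = lim_{δ → 0⁺} h̄_E(δ)`; since `h̄_E` is
nonincreasing this limit equals the supremum over `δ ∈ (0,1)`. -/
noncomputable def qADim {X : Type*} [PseudoMetricSpace X] (E : Set X) : ℝ :=
  sSup (hUpper E '' Ioo (0:ℝ) 1)

/-- The quasi-lower Assouad dimension `dim_qL E = lim_{δ → 0⁺} h̲_E(δ)`; since `h̲_E` is
nondecreasing this limit equals the infimum over `δ ∈ (0,1)`. -/
noncomputable def qLDim {X : Type*} [PseudoMetricSpace X] (E : Set X) : ℝ :=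
  sInf (hLower E '' Ioo (0:ℝ) 1)

/-- Assouad dimension `dim_A E = h̄_E(0)`. -/
noncomputable def assouadDim {X : Type*} [PseudoMetricSpace X] (E : Set X) : ℝ := hUpper E 0

/-- Lower (Assouad) dimension `dim_L E = h̲_E(0)`. -/
noncomputable def lowerAssouadDim {X : Type*} [PseudoMetricSpace X] (E : Set X) : ℝ := hLower E 0


lemma coverNum_le_card {X : Type*} [PseudoMetricSpace X] {A : Set X} {r : ℝ} (S : Finset X)
    (h : A ⊆ ⋃ x ∈ S, closedBall x r) : coverNum A r ≤ S.card :=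
  Nat.sInf_le ⟨S, rfl, h⟩

lemma coverNum_mono {X : Type*} [PseudoMetricSpace X] {A B : Set X} {r : ℝ} (hAB : A ⊆ B)
    (hB : ∃ S : Finset X, B ⊆ ⋃ x ∈ S, closedBall x r) :
    coverNum A r ≤ coverNum B r := by
  have hne : {n : ℕ | ∃ S : Finset X, S.card = n ∧ B ⊆ ⋃ x ∈ S, closedBall x r}.Nonempty := by
    obtain ⟨S, hS⟩ := hB; exact ⟨S.card, S, rfl, hS⟩
  obtain ⟨S, hcard, hcov⟩ := Nat.sInf_mem hne
  calc coverNum A r ≤ S.card := coverNum_le_card S (hAB.trans hcov)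
    _ = coverNum B r := hcard

lemma exists_grid_cover {d : ℕ} {E : Set (EuclideanSpace ℝ (Fin d))} {L r : ℝ}
    (hL : 0 ≤ L) (hr : 0 < r) (hE : E ⊆ closedBall 0 L) :
    ∃ S : Finset (EuclideanSpace ℝ (Fin d)),
      (E ⊆ ⋃ x ∈ S, closedBall x r) ∧
      S.card ≤ (2 * (⌈L * Real.sqrt d / r⌉₊ + 1) + 1) ^ d := by
  classical
  set s : ℝ := r / Real.sqrt d with hs_def
  have hs0 : 0 ≤ s := div_nonneg hr.le (Real.sqrt_nonneg _)
  set N : ℕ := ⌈L * Real.sqrt d / r⌉₊ with hN_def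
  refine ⟨Finset.image (fun k : Fin d → ℤ => (WithLp.toLp 2 (fun i => (k i : ℝ) * s) : EuclideanSpace ℝ (Fin d)))
      (Fintype.piFinset fun _ => Finset.Icc (-((N:ℤ)+1)) ((N:ℤ)+1)), ?_, ?_⟩
  · intro x hx
    have hxL : ∀ i, |x i| ≤ L := by
      intro i
      have h1 : ‖x‖ ≤ L := mem_closedBall_zero_iff.mp (hE hx)
      have h2 : |x i| ≤ ‖x‖ := by
        rw [EuclideanSpace.norm_eq]
        have h3 : |x i| ^ 2 ≤ ∑ j, ‖x j‖ ^ 2 := by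
          have := Finset.single_le_sum (f := fun j => ‖x j‖ ^ 2)
            (fun j _ => by positivity) (Finset.mem_univ i)
          simpa [Real.norm_eq_abs] using this
        calc |x i| = Real.sqrt (|x i| ^ 2) := by rw [Real.sqrt_sq_eq_abs, abs_abs]
          _ ≤ _ := Real.sqrt_le_sqrt h3
      exact h2.trans h1
    set k : Fin d → ℤ := fun i => ⌊x i / s⌋ with hk_def
    have hspos : ∀ _ : Fin d, 0 < s := by
      intro i
      have hd : 0 < d := i.pos
      have : (0:ℝ) < Real.sqrt d := Real.sqrt_pos.mpr (by exact_mod_cast hd)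
      exact div_pos hr this
    have hLs : ∀ _ : Fin d, L / s ≤ (N:ℝ) := by
      intro i
      have : L / s = L * Real.sqrt d / r := by
        rw [hs_def, div_div_eq_mul_div]
      rw [this]
      exact Nat.le_ceil _
    have hkmem : ∀ i, k i ∈ Finset.Icc (-((N:ℤ)+1)) ((N:ℤ)+1) := by
      intro i
      have hsp := hspos i
      have hub : x i / s ≤ L / s := by
        gcongr
        exact (le_abs_self _).trans (hxL i)
      have hlb : -(L / s) ≤ x i / s := by
        rw [← neg_div]
        gcongr
        exact neg_le_of_abs_le (hxL i)
      rw [Finset.mem_Icc]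
      constructor
      · have h1 : (-((N:ℤ)+1) : ℝ) ≤ x i / s - 1 := by
          push_cast
          have := hLs i
          linarith
        have h2 : (x i / s : ℝ) - 1 < (k i : ℝ) := Int.sub_one_lt_floor _
        exact_mod_cast (h1.trans_lt h2).le
      · have h1 : (k i : ℝ) ≤ x i / s := Int.floor_le _
        have h2 : (x i / s : ℝ) ≤ ((N:ℤ)+1 : ℤ) := by
          push_cast
          have := hLs i
          linarith
        exact_mod_cast h1.trans h2
    have hdist : ∀ i, |x i - (k i : ℝ) * s| ≤ s := by
      intro i
      have hsp := hspos i
      have h1 : (k i : ℝ) * s ≤ x i := (le_div_iff₀ hsp).mp (Int.floor_le _)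
      have h2 : x i < ((k i : ℝ) + 1) * s := (div_lt_iff₀ hsp).mp (Int.lt_floor_add_one _)
      rw [abs_le]
      constructor <;> nlinarith
    refine Set.mem_iUnion₂.mpr ⟨(WithLp.toLp 2 (fun i => (k i : ℝ) * s) : EuclideanSpace ℝ (Fin d)), ?_, ?_⟩
    · exact Finset.mem_image_of_mem _ (Fintype.mem_piFinset.mpr hkmem)
    · rw [mem_closedBall, EuclideanSpace.dist_eq]
      have hsum : ∑ i, dist (x i) ((k i : ℝ) * s) ^ 2 ≤ (d : ℝ) * s ^ 2 := by
        calc ∑ i, dist (x i) ((k i : ℝ) * s) ^ 2 ≤ ∑ _i : Fin d, s ^ 2 := by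
              apply Finset.sum_le_sum
              intro i _
              have := hdist i
              rw [Real.dist_eq]
              nlinarith [abs_nonneg (x i - (k i : ℝ) * s)]
          _ = (d : ℝ) * s ^ 2 := by simp [mul_comm]
      calc Real.sqrt (∑ i, dist (x i) ((k i : ℝ) * s) ^ 2) ≤ Real.sqrt ((d : ℝ) * s ^ 2) :=
            Real.sqrt_le_sqrt hsum
        _ = Real.sqrt d * s := by
            rw [Real.sqrt_mul (by positivity), Real.sqrt_sq hs0]
        _ ≤ r := by
            rcases eq_or_ne (Real.sqrt d) 0 with h0 | h0
            · rw [h0]; simpa using hr.le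
            · rw [hs_def, mul_div_cancel₀ _ h0]
  · calc _ ≤ (Fintype.piFinset fun _ : Fin d => Finset.Icc (-((N:ℤ)+1)) ((N:ℤ)+1)).card :=
        Finset.card_image_le
      _ = (Finset.Icc (-((N:ℤ)+1)) ((N:ℤ)+1)).card ^ d := Fintype.card_piFinset_const _ _
      _ ≤ (2 * (N + 1) + 1) ^ d := by
          apply Nat.pow_le_pow_left
          rw [Int.card_Icc]
          omega

lemma coverNumLoc_le {X : Type*} [PseudoMetricSpace X] {E : Set X} {r R : ℝ}
    (hB : ∃ S : Finset X, E ⊆ ⋃ x ∈ S, closedBall x r) :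
    coverNumLoc E r R ≤ coverNum E r := by
  apply csSup_le'
  rintro n ⟨x, hx, rfl⟩
  exact coverNum_mono inter_subset_left hB

lemma coverNum_le_pow {d : ℕ} {E : Set (EuclideanSpace ℝ (Fin d))} {L r : ℝ}
    (hL : 0 ≤ L) (hr : 0 < r) (hr1 : r ≤ 1) (hE : E ⊆ closedBall 0 L) :
    (coverNum E r : ℝ) ≤ ((2 * L * Real.sqrt d + 5) / r) ^ d := by
  obtain ⟨S, hcov, hcard⟩ := exists_grid_cover hL hr hE
  have h1 : (coverNum E r : ℝ) ≤ ((2 * (⌈L * Real.sqrt d / r⌉₊ + 1) + 1 : ℕ) : ℝ) ^ d := by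
    exact_mod_cast (coverNum_le_card S hcov).trans hcard
  refine h1.trans (pow_le_pow_left₀ (by positivity) ?_ d)
  have h2 : (⌈L * Real.sqrt d / r⌉₊ : ℝ) < L * Real.sqrt d / r + 1 :=
    Nat.ceil_lt_add_one (by positivity)
  rw [le_div_iff₀ hr]
  push_cast
  have h3 : (⌈L * Real.sqrt d / r⌉₊ : ℝ) * r < L * Real.sqrt d + r := by
    have := mul_lt_mul_of_pos_right h2 hr
    rwa [add_mul, div_mul_cancel₀ _ (ne_of_gt hr), one_mul] at this
  nlinarith [Real.sqrt_nonneg (d:ℝ), h3]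

lemma coverNum_le_rpow {d : ℕ} {E : Set (EuclideanSpace ℝ (Fin d))}
    (hE : Bornology.IsBounded E) (h : upperBoxDim E = 0) {ε : ℝ} (hε : 0 < ε) :
    ∃ b₀ : ℝ, 0 < b₀ ∧ b₀ ≤ 1/2 ∧ ∀ r : ℝ, 0 < r → r ≤ b₀ →
      (coverNum E r : ℝ) ≤ (1 / r) ^ ε := by
  obtain ⟨L₀, hL₀⟩ := hE.subset_closedBall 0
  set L : ℝ := max L₀ 0 with hLdef
  have hL : 0 ≤ L := le_max_right _ _
  have hEL : E ⊆ closedBall 0 L :=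
    hL₀.trans (closedBall_subset_closedBall (le_max_left _ _))
  set C : ℝ := 2 * L * Real.sqrt d + 5 with hCdef
  have hC1 : 1 ≤ C := by
    have : 0 ≤ 2 * L * Real.sqrt d := by positivity
    linarith
  have hC0 : 0 < C := lt_of_lt_of_le one_pos hC1
  have hlogC : 0 ≤ Real.log C := Real.log_nonneg hC1
  -- boundedness of the ratio
  have hbdd : IsBoundedUnder (· ≤ ·) (nhdsWithin (0:ℝ) (Ioi 0))
      (fun r : ℝ => Real.log (coverNum E r) / Real.log (1 / r)) := by
    refine ⟨(d : ℝ) * Real.log C + d, ?_⟩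
    rw [eventually_map]
    filter_upwards [Ioc_mem_nhdsGT (Real.exp_pos (-1))] with r hr
    obtain ⟨hr0, hre⟩ := hr
    have hr1 : r ≤ 1 := hre.trans (by
      have : Real.exp (-1) < Real.exp 0 := Real.exp_lt_exp.mpr (by norm_num)
      simpa using this.le)
    have hD1 : 1 ≤ Real.log (1 / r) := by
      rw [one_div, Real.log_inv]
      have : Real.log r ≤ -1 := by
        calc Real.log r ≤ Real.log (Real.exp (-1)) := Real.log_le_log hr0 hre
          _ = -1 := Real.log_exp _
      linarith
    have hD0 : 0 < Real.log (1 / r) := lt_of_lt_of_le one_pos hD1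
    rcases Nat.eq_zero_or_pos (coverNum E r) with hN | hN
    · rw [hN]
      simp only [Nat.cast_zero, Real.log_zero, zero_div]
      positivity
    · have hN0 : (0:ℝ) < (coverNum E r : ℝ) := by exact_mod_cast hN
      have hup : (coverNum E r : ℝ) ≤ (C / r) ^ d := coverNum_le_pow hL hr0 hr1 hEL
      have hlog : Real.log (coverNum E r) ≤ (d : ℝ) * (Real.log C + Real.log (1 / r)) := by
        calc Real.log (coverNum E r) ≤ Real.log ((C / r) ^ d) := Real.log_le_log hN0 hup
          _ = (d : ℝ) * Real.log (C / r) := by rw [Real.log_pow]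
          _ = (d : ℝ) * (Real.log C + Real.log (1 / r)) := by
              rw [Real.log_div (ne_of_gt hC0) (ne_of_gt hr0), one_div, Real.log_inv]
              ring
      rw [div_le_iff₀ hD0]
      have hh : (d:ℝ) * Real.log C * 1 ≤ (d:ℝ) * Real.log C * Real.log (1/r) :=
        mul_le_mul_of_nonneg_left hD1 (by positivity)
      nlinarith [hh]
  have hlim : limsup (fun r : ℝ => Real.log (coverNum E r) / Real.log (1 / r))
      (nhdsWithin (0:ℝ) (Ioi 0)) < ε := by
    rw [show limsup (fun r : ℝ => Real.log (coverNum E r) / Real.log (1 / r))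
      (nhdsWithin (0:ℝ) (Ioi 0)) = upperBoxDim E from rfl, h]
    exact hε
  have hev : ∀ᶠ r in nhdsWithin (0:ℝ) (Ioi 0),
      Real.log (coverNum E r) / Real.log (1 / r) < ε :=
    eventually_lt_of_limsup_lt hlim hbdd
  obtain ⟨u, hu, hsub⟩ := mem_nhdsGT_iff_exists_Ioc_subset.mp hev
  refine ⟨min u (1/2), lt_min hu (by norm_num), min_le_right _ _, ?_⟩
  intro r hr0 hrb
  have hru : r ∈ Ioc (0:ℝ) u := ⟨hr0, hrb.trans (min_le_left _ _)⟩
  have hfr : Real.log (coverNum E r) / Real.log (1 / r) < ε := hsub hru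
  have hrhalf : r ≤ 1/2 := hrb.trans (min_le_right _ _)
  have hD0 : 0 < Real.log (1 / r) := by
    rw [one_div, Real.log_inv]
    have : Real.log r < 0 := Real.log_neg hr0 (lt_of_le_of_lt hrhalf (by norm_num))
    linarith
  rcases Nat.eq_zero_or_pos (coverNum E r) with hN | hN
  · rw [hN]
    simp only [Nat.cast_zero]
    positivity
  · have hN0 : (0:ℝ) < (coverNum E r : ℝ) := by exact_mod_cast hN
    have hlt : Real.log (coverNum E r) < Real.log ((1 / r) ^ ε) := by
      rw [Real.log_rpow (by positivity)]
      calc Real.log (coverNum E r) < ε * Real.log (1 / r) := by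
            rwa [div_lt_iff₀ hD0] at hfr
        _ = ε * Real.log (1 / r) := rfl
    have := (Real.log_lt_log_iff hN0 (by positivity)).mp hlt
    exact this.le


/-- A bounded subset of `ℝ^d` with upper box dimension `0` has quasi-Assouad dimension `0`. -/
theorem qADim_eq_zero_of_upperBoxDim_eq_zero
    {d : ℕ} (E : Set (EuclideanSpace ℝ (Fin d)))
    (hE : Bornology.IsBounded E) (h : upperBoxDim E = 0) :
    qADim E = 0 := by
  have hmem : ∀ δ ∈ Ioo (0:ℝ) 1, ∀ α : ℝ, 0 < α →
      α ∈ {α : ℝ | 0 ≤ α ∧ ∃ b c : ℝ, 0 < b ∧ 0 < c ∧ ∀ r R : ℝ,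
        0 < r → r ≤ R ^ (1 + δ) → R ^ (1 + δ) ≤ R → R ≤ b →
        (coverNumLoc E r R : ℝ) ≤ c * (R / r) ^ α} := by
    intro δ hδ α hα
    have hδ0 := hδ.1
    have h1δ : (0:ℝ) < 1 + δ := by linarith
    have hε : 0 < α * δ / (1 + δ) := by positivity
    obtain ⟨b₀, hb₀, hb₀half, hbound⟩ := coverNum_le_rpow hE h hε
    refine ⟨hα.le, b₀, 1, hb₀, one_pos, ?_⟩
    intro r R hr hrR hRR hRb
    have hR0 : 0 < R := lt_of_lt_of_le hr (hrR.trans hRR)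
    have hrb : r ≤ b₀ := (hrR.trans hRR).trans hRb
    obtain ⟨L₀, hL₀⟩ := hE.subset_closedBall 0
    obtain ⟨S, hcov, -⟩ := exists_grid_cover (le_max_right L₀ 0) hr
      (hL₀.trans (closedBall_subset_closedBall (le_max_left _ _)))
    have h1 : (coverNumLoc E r R : ℝ) ≤ (coverNum E r : ℝ) := by
      exact_mod_cast coverNumLoc_le ⟨S, hcov⟩
    have h2 : (coverNum E r : ℝ) ≤ (1/r) ^ (α * δ / (1+δ)) := hbound r hr hrb
    rw [one_mul]
    refine h1.trans (h2.trans ?_)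
    have hRlb : r ^ ((1:ℝ)/(1+δ)) ≤ R := by
      have h3 : r ^ ((1:ℝ)/(1+δ)) ≤ (R ^ (1+δ)) ^ ((1:ℝ)/(1+δ)) :=
        Real.rpow_le_rpow hr.le hrR (by positivity)
      rwa [← Real.rpow_mul hR0.le, mul_one_div, div_self (ne_of_gt h1δ), Real.rpow_one] at h3
    have key : (r ^ ((1:ℝ)/(1+δ)) / r) ^ α = (1/r) ^ (α * δ / (1+δ)) := by
      rw [show r ^ ((1:ℝ)/(1+δ)) / r = r ^ ((1:ℝ)/(1+δ) - 1) by
            rw [Real.rpow_sub hr, Real.rpow_one],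
          ← Real.rpow_mul hr.le,
          show (1/r) ^ (α * δ / (1+δ)) = r ^ (-(α * δ / (1+δ))) by
            rw [Real.rpow_neg hr.le, ← Real.inv_rpow hr.le, one_div]]
      congr 1
      field_simp
      ring
    calc (1/r) ^ (α * δ / (1+δ)) = (r ^ ((1:ℝ)/(1+δ)) / r) ^ α := key.symm
      _ ≤ (R / r) ^ α := Real.rpow_le_rpow (by positivity) (by gcongr) hα.le
  have hzero : ∀ δ ∈ Ioo (0:ℝ) 1, hUpper E δ = 0 := by
    intro δ hδ
    have hbdd : BddBelow {α : ℝ | 0 ≤ α ∧ ∃ b c : ℝ, 0 < b ∧ 0 < c ∧ ∀ r R : ℝ,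
        0 < r → r ≤ R ^ (1 + δ) → R ^ (1 + δ) ≤ R → R ≤ b →
        (coverNumLoc E r R : ℝ) ≤ c * (R / r) ^ α} := ⟨0, fun a ha => ha.1⟩
    refine le_antisymm ?_ ?_
    · by_contra hc
      push_neg at hc
      have h2 : hUpper E δ ≤ hUpper E δ / 2 := csInf_le hbdd (hmem δ hδ _ (half_pos hc))
      linarith
    · exact le_csInf ⟨1, hmem δ hδ 1 one_pos⟩ fun a ha => ha.1
  have himg : hUpper E '' Ioo (0:ℝ) 1 = {0} := by
    apply Subset.antisymm
    · rintro y ⟨δ, hδ, rfl⟩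
      exact hzero δ hδ
    · rw [singleton_subset_iff]
      exact ⟨1/2, by constructor <;> norm_num, hzero (1/2) (by constructor <;> norm_num)⟩
  rw [show qADim E = sSup (hUpper E '' Ioo (0:ℝ) 1) from rfl, himg, csSup_singleton]
end

section
/- There exists a bounded set E ⊆ ℝ² such that dim_qA E = 1/2 while dim_qA π_x(E) = 1, where π_x : ℝ² → ℝ is the orthogonal projection onto the first coordinate, π_x(x,y) = x. In particular, the quasi-Assouad dimension can strictly increase under a Lipschitz map (an orthogonal projection). -/
open Metric Filter Set
open scoped ENNReal

namespace QAP


/-- bit-spread: binary digits reinterpreted in base 4 -/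
def g : ℕ → ℕ
  | 0 => 0
  | (n+1) => 4 * g ((n+1)/2) + (n+1) % 2
decreasing_by exact Nat.div_lt_self (Nat.succ_pos n) one_lt_two

lemma g_zero : g 0 = 0 := by rw [g]

lemma g_eq (n : ℕ) : g n = 4 * g (n / 2) + n % 2 := by
  cases n with
  | zero => rw [g]
  | succ k => rw [g]

lemma g_two_mul (n : ℕ) : g (2 * n) = 4 * g n := by
  rw [g_eq]
  have h1 : 2 * n / 2 = n := by omega
  have h2 : 2 * n % 2 = 0 := by omega
  rw [h1, h2]
  omega

lemma g_two_mul_add_one (n : ℕ) : g (2 * n + 1) = 4 * g n + 1 := by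
  rw [g_eq]
  have h1 : (2 * n + 1) / 2 = n := by omega
  have h2 : (2 * n + 1) % 2 = 1 := by omega
  rw [h1, h2]

lemma g_lt_succ (n : ℕ) : g n < g (n + 1) := by
  induction n using Nat.strong_induction_on with
  | _ n ih =>
    rcases Nat.even_or_odd n with ⟨a, ha⟩ | ⟨a, ha⟩
    · subst ha
      have h1 : g (a + a) = 4 * g a := by rw [← two_mul, g_two_mul]
      have h2 : g (a + a + 1) = 4 * g a + 1 := by rw [← two_mul, g_two_mul_add_one]
      omega
    · subst ha
      have h1 : g (2 * a + 1) = 4 * g a + 1 := g_two_mul_add_one a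
      have h2 : g (2 * a + 1 + 1) = 4 * g (a + 1) := by
        have : 2 * a + 1 + 1 = 2 * (a + 1) := by ring
        rw [this, g_two_mul]
      have h3 : g a < g (a + 1) := ih a (by omega)
      omega

lemma g_strictMono : StrictMono g := strictMono_nat_of_lt_succ g_lt_succ

/-- splitting lemma -/
lemma g_split (s q l : ℕ) (hl : l < 2 ^ s) : g (q * 2 ^ s + l) = 4 ^ s * g q + g l := by
  induction s generalizing l with
  | zero =>
    interval_cases l
    simp [g_zero]
  | succ s ih =>
    have hkey : q * 2 ^ (s + 1) + l = 2 * (q * 2 ^ s + l / 2) + l % 2 := by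
      have := Nat.div_add_mod l 2; ring_nf; omega
    rw [hkey, g_eq]
    have h1 : (2 * (q * 2 ^ s + l / 2) + l % 2) / 2 = q * 2 ^ s + l / 2 := by omega
    have h2 : (2 * (q * 2 ^ s + l / 2) + l % 2) % 2 = l % 2 := by omega
    rw [h1, h2, ih (l / 2) (by omega)]
    have h3 : g l = 4 * g (l / 2) + l % 2 := g_eq l
    ring_nf
    omega

/-- bound: digits below level s contribute < 4^s/3 -/
lemma g_bound (s l : ℕ) (hl : l < 2 ^ s) : 3 * g l + 1 ≤ 4 ^ s := by
  induction s generalizing l with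
  | zero => interval_cases l; simp [g_zero]
  | succ s ih =>
    have h0 : g l = 4 * g (l / 2) + l % 2 := g_eq l
    have h1 : 3 * g (l / 2) + 1 ≤ 4 ^ s := ih (l / 2) (by omega)
    have : (4:ℕ) ^ (s+1) = 4 * 4 ^ s := by ring
    omega

/-- cross-group separation at level s -/
lemma g_sep (s a b : ℕ) (h : a / 2 ^ s < b / 2 ^ s) :
    3 * g a + 2 * 4 ^ s + 1 ≤ 3 * g b := by
  have ha := Nat.div_add_mod a (2 ^ s)
  have hb := Nat.div_add_mod b (2 ^ s)
  have hma : a % 2 ^ s < 2 ^ s := Nat.mod_lt _ (Nat.two_pow_pos s)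
  have hmb : b % 2 ^ s < 2 ^ s := Nat.mod_lt _ (Nat.two_pow_pos s)
  have hga : g a = 4 ^ s * g (a / 2 ^ s) + g (a % 2 ^ s) := by
    conv_lhs => rw [← ha, Nat.mul_comm]
    exact g_split s _ _ hma
  have hgb : g b = 4 ^ s * g (b / 2 ^ s) + g (b % 2 ^ s) := by
    conv_lhs => rw [← hb, Nat.mul_comm]
    exact g_split s _ _ hmb
  have hmono : g (a / 2 ^ s) + 1 ≤ g (b / 2 ^ s) := g_strictMono h
  have hmul : 4 ^ s * g (a / 2 ^ s) + 4 ^ s ≤ 4 ^ s * g (b / 2 ^ s) := by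
    calc 4 ^ s * g (a / 2 ^ s) + 4 ^ s = 4 ^ s * (g (a / 2 ^ s) + 1) := by ring
    _ ≤ 4 ^ s * g (b / 2 ^ s) := Nat.mul_le_mul_left _ hmono
  have hba := g_bound s _ hma
  have hbb := g_bound s _ hmb
  omega

/-- same-group bound at level s -/
lemma g_same (s a b : ℕ) (h : a / 2 ^ s = b / 2 ^ s) :
    3 * g a + 1 ≤ 3 * g b + 4 ^ s ∧ a + 1 ≤ b + 2 ^ s := by
  have ha := Nat.div_add_mod a (2 ^ s)
  have hb := Nat.div_add_mod b (2 ^ s)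
  rw [h] at ha
  have hma : a % 2 ^ s < 2 ^ s := Nat.mod_lt _ (Nat.two_pow_pos s)
  have hmb : b % 2 ^ s < 2 ^ s := Nat.mod_lt _ (Nat.two_pow_pos s)
  have hga : g a = 4 ^ s * g (b / 2 ^ s) + g (a % 2 ^ s) := by
    conv_lhs => rw [← ha, Nat.mul_comm]
    exact g_split s _ _ hma
  have hgb : g b = 4 ^ s * g (b / 2 ^ s) + g (b % 2 ^ s) := by
    conv_lhs => rw [← hb, Nat.mul_comm]
    exact g_split s _ _ hmb
  have hba := g_bound s _ hma
  have hbb := g_bound s _ hmb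
  omega



variable {X : Type*} [PseudoMetricSpace X]

lemma coverNum_le_card {A : Set X} {r : ℝ} (S : Finset X)
    (h : A ⊆ ⋃ x ∈ S, closedBall x r) : coverNum A r ≤ S.card :=
  Nat.sInf_le ⟨S, rfl, h⟩

/-- existence of finite covers for bounded sets in proper spaces -/
lemma exists_cover [ProperSpace X] {A : Set X} (hA : Bornology.IsBounded A) {r : ℝ}
    (hr : 0 < r) : ∃ S : Finset X, A ⊆ ⋃ x ∈ S, closedBall x r := by
  rcases A.eq_empty_or_nonempty with hemp | ⟨x0, hx0⟩
  · exact ⟨∅, by simp [hemp]⟩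
  obtain ⟨K, hK⟩ := hA.subset_closedBall x0
  have hcomp : IsCompact (closedBall x0 K) := isCompact_closedBall x0 K
  have hcov : closedBall x0 K ⊆ ⋃ y : X, ball y r := by
    intro y _; exact mem_iUnion.mpr ⟨y, mem_ball_self hr⟩
  obtain ⟨t, ht⟩ := hcomp.elim_finite_subcover (fun y : X => ball y r)
    (fun y => isOpen_ball) hcov
  exact ⟨t, fun a ha => by
    obtain ⟨y, hy, hay⟩ := mem_iUnion₂.mp (ht (hK ha))
    exact mem_iUnion₂.mpr ⟨y, hy, ball_subset_closedBall hay⟩⟩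

lemma coverNum_spec {A : Set X} {r : ℝ}
    (h : ∃ S : Finset X, A ⊆ ⋃ x ∈ S, closedBall x r) :
    ∃ S : Finset X, S.card = coverNum A r ∧ A ⊆ ⋃ x ∈ S, closedBall x r := by
  have hne : {n : ℕ | ∃ S : Finset X, S.card = n ∧ A ⊆ ⋃ x ∈ S, closedBall x r}.Nonempty := by
    obtain ⟨S, hS⟩ := h
    exact ⟨S.card, S, rfl, hS⟩
  obtain ⟨S, hcard, hcov⟩ := Nat.sInf_mem hne
  exact ⟨S, hcard, hcov⟩

lemma coverNum_mono {A B : Set X} {r : ℝ} (hAB : A ⊆ B)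
    (h : ∃ S : Finset X, B ⊆ ⋃ x ∈ S, closedBall x r) :
    coverNum A r ≤ coverNum B r := by
  obtain ⟨S, hcard, hcov⟩ := coverNum_spec h
  calc coverNum A r ≤ S.card := coverNum_le_card S (hAB.trans hcov)
  _ = coverNum B r := hcard

/-- separated sets give lower bounds for covering numbers -/
lemma card_le_coverNum {A : Set X} {r : ℝ} (hr : 0 ≤ r) (T : Finset X) (hT : ↑T ⊆ A)
    (hsep : ∀ v ∈ T, ∀ w ∈ T, v ≠ w → 2 * r < dist v w)
    (h : ∃ S : Finset X, A ⊆ ⋃ x ∈ S, closedBall x r) :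
    T.card ≤ coverNum A r := by
  classical
  obtain ⟨S, hcard, hcov⟩ := coverNum_spec h
  rw [← hcard]
  have hfun : ∀ v : X, ∃ s : X, v ∈ T → s ∈ S ∧ v ∈ closedBall s r := by
    intro v
    by_cases hv : v ∈ T
    · have := hcov (hT hv)
      obtain ⟨s, hs, hvs⟩ := mem_iUnion₂.mp this
      exact ⟨s, fun _ => ⟨hs, hvs⟩⟩
    · exact ⟨v, fun h => absurd h hv⟩
  choose f hf using hfun
  apply Finset.card_le_card_of_injOn f
  · intro v hv
    exact ((hf v) hv).1
  · intro v hv w hw hvw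
    rw [Finset.mem_coe] at hv hw
    by_contra hne
    have h1 : dist v (f v) ≤ r := mem_closedBall.mp ((hf v) hv).2
    have h2 : dist w (f w) ≤ r := mem_closedBall.mp ((hf w) hw).2
    have h3 : 2 * r < dist v w := hsep v hv w hw hne
    rw [hvw] at h1
    have : dist v w ≤ dist v (f w) + dist w (f w) := dist_triangle_right v w (f w)
    linarith

/-- covering numbers bounded by max separated-set cardinality -/
lemma coverNum_le_of_sep {A : Set X} {r : ℝ} (hr : 0 < r) (N : ℕ)
    (h : ∀ T : Finset X, ↑T ⊆ A → (∀ v ∈ T, ∀ w ∈ T, v ≠ w → r < dist v w) → T.card ≤ N) :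
    coverNum A r ≤ N := by
  classical
  set P : Set ℕ := {n | ∃ T : Finset X, ↑T ⊆ A ∧ (∀ v ∈ T, ∀ w ∈ T, v ≠ w → r < dist v w)
      ∧ T.card = n} with hP
  have hPne : P.Nonempty := ⟨0, ∅, by simp⟩
  have hPbdd : BddAbove P := by
    refine ⟨N, fun n hn => ?_⟩
    obtain ⟨T, hT1, hT2, hT3⟩ := hn
    exact hT3 ▸ h T hT1 hT2
  obtain ⟨T, hT1, hT2, hT3⟩ := Nat.sSup_mem hPne hPbdd
  have hcov : A ⊆ ⋃ x ∈ T, closedBall x r := by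
    intro a ha
    by_contra hna
    have haT : a ∉ T := by
      intro haT
      exact hna (mem_iUnion₂.mpr ⟨a, haT, mem_closedBall_self (le_of_lt hr)⟩)
    have hsep' : ∀ v ∈ insert a T, ∀ w ∈ insert a T, v ≠ w → r < dist v w := by
      intro v hv w hw hvw
      rcases Finset.mem_insert.mp hv with rfl | hv' <;>
        rcases Finset.mem_insert.mp hw with rfl | hw'
      · exact absurd rfl hvw
      · have : w ∉ closedBall w r → False := fun hc => hc (mem_closedBall_self hr.le)
        have hwA : v ∉ closedBall w r := fun hc => hna (mem_iUnion₂.mpr ⟨w, hw', hc⟩)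
        rw [dist_comm]
        simpa [mem_closedBall, not_le, dist_comm] using hwA
      · have hvA : w ∉ closedBall v r := fun hc => hna (mem_iUnion₂.mpr ⟨v, hv', hc⟩)
        simpa [mem_closedBall, not_le, dist_comm] using hvA
      · exact hT2 v hv' w hw' hvw
    have hmem : (insert a T).card ∈ P :=
      ⟨insert a T, by
        intro z hz
        rcases Finset.mem_insert.mp (Finset.mem_coe.mp hz) with rfl | hz'
        · exact ha
        · exact hT1 hz', hsep', rfl⟩
    have := le_csSup hPbdd hmem
    rw [Finset.card_insert_of_notMem haT] at this
    omega
  calc coverNum A r ≤ T.card := coverNum_le_card T hcov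
  _ ≤ N := hT3 ▸ h T hT1 hT2

lemma coverNumLoc_le {E : Set X} {r R : ℝ} {c : ℝ} (hc : 0 ≤ c)
    (h : ∀ x ∈ E, (coverNum (E ∩ closedBall x R) r : ℝ) ≤ c) :
    (coverNumLoc E r R : ℝ) ≤ c := by
  rcases Set.eq_empty_or_nonempty {n : ℕ | ∃ x ∈ E, n = coverNum (E ∩ closedBall x R) r}
    with hemp | hne
  · simp [coverNumLoc, hemp, csSup_empty, hc]
  · have hbdd : BddAbove {n : ℕ | ∃ x ∈ E, n = coverNum (E ∩ closedBall x R) r} := by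
      rcases le_or_gt c 0 with hc0 | hc0
      · refine ⟨0, fun n hn => ?_⟩
        obtain ⟨x, hx, rfl⟩ := hn
        have := h x hx
        have : (coverNum (E ∩ closedBall x R) r : ℝ) ≤ 0 := le_trans this hc0
        exact_mod_cast this
      · refine ⟨⌊c⌋₊, fun n hn => ?_⟩
        obtain ⟨x, hx, rfl⟩ := hn
        exact Nat.le_floor (h x hx)
    obtain ⟨x, hx, heq⟩ := Nat.sSup_mem hne hbdd
    rw [coverNumLoc, heq]
    exact h x hx

lemma le_coverNumLoc [ProperSpace X] {E : Set X} {r R : ℝ} (hr : 0 < r)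
    (hE : Bornology.IsBounded E) {x : X} (hx : x ∈ E) :
    coverNum (E ∩ closedBall x R) r ≤ coverNumLoc E r R := by
  have hbdd : BddAbove {n : ℕ | ∃ x ∈ E, n = coverNum (E ∩ closedBall x R) r} := by
    refine ⟨coverNum E r, fun n hn => ?_⟩
    obtain ⟨y, hy, rfl⟩ := hn
    exact coverNum_mono inter_subset_left (exists_cover hE hr)
  exact le_csSup hbdd ⟨x, hx, rfl⟩



abbrev E2 := EuclideanSpace ℝ (Fin 2)

noncomputable def pt (a b : ℝ) : E2 := (WithLp.equiv 2 (Fin 2 → ℝ)).symm ![a, b]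

@[simp] lemma pt_apply0 (a b : ℝ) : pt a b 0 = a := rfl
@[simp] lemma pt_apply1 (a b : ℝ) : pt a b 1 = b := rfl

lemma dist_coords (v w : E2) : dist v w ≤ |v 0 - w 0| + |v 1 - w 1| := by
  rw [EuclideanSpace.dist_eq, Fin.sum_univ_two]
  simp only [Real.dist_eq, sq_abs]
  have h1 : (v 0 - w 0) ^ 2 + (v 1 - w 1) ^ 2 ≤ (|v 0 - w 0| + |v 1 - w 1|) ^ 2 := by
    nlinarith [abs_nonneg (v 0 - w 0), abs_nonneg (v 1 - w 1), sq_abs (v 0 - w 0),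
      sq_abs (v 1 - w 1)]
  calc Real.sqrt ((v 0 - w 0) ^ 2 + (v 1 - w 1) ^ 2)
      ≤ Real.sqrt ((|v 0 - w 0| + |v 1 - w 1|) ^ 2) := Real.sqrt_le_sqrt h1
    _ = |v 0 - w 0| + |v 1 - w 1| := Real.sqrt_sq (by positivity)

lemma coord0_le_dist (v w : E2) : |v 0 - w 0| ≤ dist v w := by
  rw [EuclideanSpace.dist_eq, Fin.sum_univ_two]
  simp only [Real.dist_eq, sq_abs]
  exact Real.abs_le_sqrt (by nlinarith [sq_nonneg (v 1 - w 1)])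

lemma coord1_le_dist (v w : E2) : |v 1 - w 1| ≤ dist v w := by
  rw [EuclideanSpace.dist_eq, Fin.sum_univ_two]
  simp only [Real.dist_eq, sq_abs]
  exact Real.abs_le_sqrt (by nlinarith [sq_nonneg (v 0 - w 0)])


noncomputable def bp (u lam : ℝ) (j : ℕ) : E2 := pt (u + j * lam) (3 * lam * g j)

lemma bp0 (u lam : ℝ) (j : ℕ) : bp u lam j 0 = u + j * lam := rfl
lemma bp1 (u lam : ℝ) (j : ℕ) : bp u lam j 1 = 3 * lam * g j := rfl

noncomputable def jd (u lam : ℝ) (v : E2) : ℕ := ⌊(v 0 - u) / lam⌋₊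

lemma jd_bp {u lam : ℝ} (hlam : 0 < lam) (j : ℕ) : jd u lam (bp u lam j) = j := by
  unfold jd
  rw [bp0]
  have : (u + j * lam - u) / lam = (j : ℝ) := by field_simp; ring
  rw [this, Nat.floor_natCast]

lemma bp_inj {u lam : ℝ} (hlam : 0 < lam) {j j' : ℕ} (h : bp u lam j = bp u lam j') :
    j = j' := by
  have := jd_bp (u := u) hlam j
  rw [h, jd_bp hlam] at this
  omega

lemma bp_dist_same {u lam : ℝ} (hlam : 0 ≤ lam) {s j j' : ℕ} (h : j / 2 ^ s = j' / 2 ^ s) :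
    dist (bp u lam j) (bp u lam j') ≤ 2 * lam * 4 ^ s := by
  obtain ⟨hg1, hj1⟩ := g_same s j j' h
  obtain ⟨hg2, hj2⟩ := g_same s j' j h.symm
  have hx : |bp u lam j 0 - bp u lam j' 0| ≤ lam * (2 ^ s - 1) := by
    rw [bp0, bp0]
    have hj1' : (j : ℝ) + 1 ≤ (j' : ℝ) + 2 ^ s := by exact_mod_cast hj1
    have hj2' : (j' : ℝ) + 1 ≤ (j : ℝ) + 2 ^ s := by exact_mod_cast hj2
    have : u + j * lam - (u + j' * lam) = ((j:ℝ) - j') * lam := by ring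
    rw [this, abs_mul, abs_of_nonneg hlam]
    have : |(j:ℝ) - j'| ≤ 2 ^ s - 1 := by
      rw [abs_sub_le_iff]; constructor <;> linarith
    nlinarith [abs_nonneg ((j:ℝ) - j')]
  have hy : |bp u lam j 1 - bp u lam j' 1| ≤ lam * (4 ^ s - 1) := by
    rw [bp1, bp1]
    have hg1' : 3 * (g j : ℝ) + 1 ≤ 3 * (g j' : ℝ) + 4 ^ s := by exact_mod_cast hg1
    have hg2' : 3 * (g j' : ℝ) + 1 ≤ 3 * (g j : ℝ) + 4 ^ s := by exact_mod_cast hg2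
    have : 3 * lam * g j - 3 * lam * g j' = lam * (3 * (g j : ℝ) - 3 * (g j' : ℝ)) := by ring
    rw [this, abs_mul, abs_of_nonneg hlam]
    have : |3 * (g j : ℝ) - 3 * (g j' : ℝ)| ≤ 4 ^ s - 1 := by
      rw [abs_sub_le_iff]; constructor <;> linarith
    nlinarith [abs_nonneg (3 * (g j : ℝ) - 3 * (g j' : ℝ))]
  have h2s : (2:ℝ) ^ s ≤ 4 ^ s := pow_le_pow_left₀ (by norm_num) (by norm_num) s
  have h4s : (1:ℝ) ≤ 4 ^ s := one_le_pow₀ (by norm_num : (1:ℝ) ≤ 4)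
  calc dist (bp u lam j) (bp u lam j')
      ≤ |bp u lam j 0 - bp u lam j' 0| + |bp u lam j 1 - bp u lam j' 1| := dist_coords _ _
    _ ≤ lam * (2 ^ s - 1) + lam * (4 ^ s - 1) := add_le_add hx hy
    _ ≤ 2 * lam * 4 ^ s := by nlinarith

lemma bp_dist_diff {u lam : ℝ} (hlam : 0 < lam) {s j j' : ℕ} (h : j / 2 ^ s ≠ j' / 2 ^ s) :
    2 * lam * 4 ^ s < dist (bp u lam j) (bp u lam j') := by
  have hkey : 2 * 4 ^ s + 1 ≤ |3 * (g j : ℝ) - 3 * (g j' : ℝ)| := by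
    rcases Nat.lt_or_ge (j / 2 ^ s) (j' / 2 ^ s) with hlt | hge
    · have := g_sep s j j' hlt
      have h' : 3 * (g j : ℝ) + 2 * 4 ^ s + 1 ≤ 3 * (g j' : ℝ) := by exact_mod_cast this
      rw [abs_sub_comm, abs_of_nonneg (by linarith [pow_pos (by norm_num : (0:ℝ) < 4) s])]
      linarith
    · have hlt' : j' / 2 ^ s < j / 2 ^ s := lt_of_le_of_ne hge (Ne.symm h)
      have := g_sep s j' j hlt'
      have h' : 3 * (g j' : ℝ) + 2 * 4 ^ s + 1 ≤ 3 * (g j : ℝ) := by exact_mod_cast this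
      rw [abs_of_nonneg (by linarith [pow_pos (by norm_num : (0:ℝ) < 4) s])]
      linarith
  have hy : lam * (2 * 4 ^ s + 1) ≤ |bp u lam j 1 - bp u lam j' 1| := by
    rw [bp1, bp1]
    have : 3 * lam * g j - 3 * lam * g j' = lam * (3 * (g j : ℝ) - 3 * (g j' : ℝ)) := by ring
    rw [this, abs_mul, abs_of_pos hlam]
    exact mul_le_mul_of_nonneg_left hkey hlam.le
  have := coord1_le_dist (bp u lam j) (bp u lam j')
  nlinarith [pow_pos (by norm_num : (0:ℝ) < 4) s]

lemma pow_two_cast_sq (n : ℕ) : ((2:ℝ) ^ n) ^ 2 = (4:ℝ) ^ n := by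
  rw [← pow_mul, mul_comm, pow_mul]
  norm_num

lemma block_count_a {u lam r : ℝ} {m : ℕ} (hlam : 0 < lam) (hr : 0 < r)
    (hrL : r ≤ 2 * (lam * 4 ^ m)) (T : Finset E2)
    (hT : ∀ v ∈ T, ∃ j < 2 ^ m, v = bp u lam j)
    (hsep : ∀ v ∈ T, ∀ w ∈ T, v ≠ w → r < dist v w) :
    (T.card : ℝ) ≤ Real.sqrt (8 * (lam * 4 ^ m) / r) := by
  classical
  set P : ℕ → Prop := fun i => 2 * lam * 4 ^ i ≤ r with hPdef
  set s := Nat.findGreatest P m with hs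
  have hsm : s ≤ m := Nat.findGreatest_le m
  have hkey : r ≤ 8 * lam * 4 ^ s := by
    rcases lt_or_eq_of_le hsm with hlt | heq
    · have hnp : ¬ P (s + 1) := Nat.findGreatest_is_greatest (Nat.lt_succ_self _) (by omega)
      rw [hPdef] at hnp
      push_neg at hnp
      have h4 : (2:ℝ) * lam * 4 ^ (s + 1) = 8 * lam * 4 ^ s := by ring
      linarith
    · rw [← heq] at hrL
      linarith
  -- injectivity: points in the same level-s group coincide
  have hinj : ∀ v ∈ T, ∀ w ∈ T, jd u lam v / 2 ^ s = jd u lam w / 2 ^ s → v = w := by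
    intro v hv w hw hgroup
    obtain ⟨jv, hjv, rfl⟩ := hT v hv
    obtain ⟨jw, hjw, rfl⟩ := hT w hw
    rw [jd_bp hlam, jd_bp hlam] at hgroup
    by_contra hne
    by_cases hP0 : P 0
    · have hPs : P s := Nat.findGreatest_spec (Nat.zero_le m) hP0
      rw [hPdef] at hPs
      have hd : dist (bp u lam jv) (bp u lam jw) ≤ 2 * lam * 4 ^ s :=
        bp_dist_same hlam.le hgroup
      have := hsep _ hv _ hw hne
      linarith
    · have hs0 : s = 0 := by
        rw [hs, Nat.findGreatest_eq_zero_iff]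
        intro n hn hnm hPn
        apply hP0
        rw [hPdef] at hPn ⊢
        have : (1:ℝ) ≤ 4 ^ n := one_le_pow₀ (by norm_num)
        nlinarith
      rw [hs0] at hgroup
      simp at hgroup
      exact hne (by rw [hgroup])
  have hcard : T.card ≤ 2 ^ (m - s) := by
    have := Finset.card_le_card_of_injOn (fun v => jd u lam v / 2 ^ s)
      (s := T) (t := Finset.range (2 ^ (m - s)))
      (by
        intro v hv
        obtain ⟨j, hj, rfl⟩ := hT v hv
        simp only []
        rw [jd_bp hlam, Finset.mem_coe, Finset.mem_range]
        rw [Nat.div_lt_iff_lt_mul (Nat.two_pow_pos s)]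
        rw [← pow_add]
        have : m - s + s = m := by omega
        rw [this]; exact hj)
      (by
        intro v hv w hw hvw
        rw [Finset.mem_coe] at hv hw
        exact hinj v hv w hw hvw)
    simpa using this
  have hL : (0:ℝ) < lam * 4 ^ m := by positivity
  have hcard' : (T.card : ℝ) ≤ 2 ^ (m - s) := by exact_mod_cast hcard
  refine le_trans hcard' ?_
  rw [show (8 * (lam * 4 ^ m) / r) = (8 * lam * 4 ^ m) / r by ring]
  rw [Real.le_sqrt (by positivity) (by positivity)]
  rw [pow_two_cast_sq]
  rw [le_div_iff₀ hr]
  have h4 : (4:ℝ) ^ (m - s) * 4 ^ s = 4 ^ m := by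
    rw [← pow_add]; congr 1; omega
  calc (4:ℝ) ^ (m - s) * r ≤ 4 ^ (m - s) * (8 * lam * 4 ^ s) := by
        apply mul_le_mul_of_nonneg_left hkey (by positivity)
    _ = 8 * lam * 4 ^ m := by rw [← h4]; ring

lemma block_count_b {u lam r R : ℝ} {m : ℕ} (hlam : 0 < lam) (hr : 0 < r) (hrR : r ≤ R)
    (hRL : R ≤ lam * 4 ^ m) (x : E2) (T : Finset E2)
    (hT : ∀ v ∈ T, (∃ j < 2 ^ m, v = bp u lam j) ∧ dist v x ≤ R)
    (hsep : ∀ v ∈ T, ∀ w ∈ T, v ≠ w → r < dist v w) :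
    (T.card : ℝ) ≤ Real.sqrt (32 * R / r) := by
  classical
  rcases T.eq_empty_or_nonempty with rfl | ⟨v0, hv0⟩
  · simp only [Finset.card_empty, Nat.cast_zero]
    positivity
  set P : ℕ → Prop := fun i => 2 * lam * 4 ^ i ≤ r with hPdef
  set s := Nat.findGreatest P m with hs
  have hsm : s ≤ m := Nat.findGreatest_le m
  have hR0 : 0 < R := lt_of_lt_of_le hr hrR
  -- t : smallest level with lam * 4^t ≥ R
  have hex : ∃ t, R ≤ lam * 4 ^ t := ⟨m, hRL⟩
  set t := Nat.find hex with ht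
  have htm : t ≤ m := Nat.find_min' hex hRL
  have htspec : R ≤ lam * 4 ^ t := Nat.find_spec hex
  set t' := max s t with ht'
  have ht'm : t' ≤ m := by omega
  have hst' : s ≤ t' := le_max_left _ _
  -- injectivity on level-s groups
  have hinj : ∀ v ∈ T, ∀ w ∈ T, jd u lam v / 2 ^ s = jd u lam w / 2 ^ s → v = w := by
    intro v hv w hw hgroup
    obtain ⟨⟨jv, hjv, rfl⟩, _⟩ := hT v hv
    obtain ⟨⟨jw, hjw, rfl⟩, _⟩ := hT w hw
    rw [jd_bp hlam, jd_bp hlam] at hgroup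
    by_contra hne
    by_cases hP0 : P 0
    · have hPs : P s := Nat.findGreatest_spec (Nat.zero_le m) hP0
      rw [hPdef] at hPs
      have hd : dist (bp u lam jv) (bp u lam jw) ≤ 2 * lam * 4 ^ s :=
        bp_dist_same hlam.le hgroup
      have := hsep _ hv _ hw hne
      linarith
    · have hs0 : s = 0 := by
        rw [hs, Nat.findGreatest_eq_zero_iff]
        intro n hn hnm hPn
        apply hP0
        rw [hPdef] at hPn ⊢
        have : (1:ℝ) ≤ 4 ^ n := one_le_pow₀ (by norm_num)
        nlinarith
      rw [hs0] at hgroup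
      simp at hgroup
      exact hne (by rw [hgroup])
  -- all points lie in the same level-t' supergroup
  set Q := jd u lam v0 / 2 ^ t' with hQ
  have hsuper : ∀ v ∈ T, jd u lam v / 2 ^ t' = Q := by
    intro v hv
    by_contra hne
    obtain ⟨⟨jv, hjv, hveq⟩, hvx⟩ := hT v hv
    obtain ⟨⟨j0, hj0, hv0eq⟩, hv0x⟩ := hT v0 hv0
    rw [hQ, hveq, hv0eq, jd_bp hlam, jd_bp hlam] at hne
    have hd : 2 * lam * 4 ^ t' < dist (bp u lam jv) (bp u lam j0) := bp_dist_diff hlam hne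
    have htri : dist (bp u lam jv) (bp u lam j0) ≤ 2 * R := by
      rw [← hveq, ← hv0eq] at *
      calc dist v v0 ≤ dist v x + dist v0 x := dist_triangle_right v v0 x
        _ ≤ 2 * R := by linarith
    have h4t : (4:ℝ) ^ t ≤ 4 ^ t' := by
      apply pow_le_pow_right₀ (by norm_num)
      omega
    nlinarith
  -- count: injection into an interval of 2^(t'-s) group indices
  have hcard : T.card ≤ 2 ^ (t' - s) := by
    have hmem : ∀ v ∈ T, jd u lam v / 2 ^ s ∈
        Finset.Ico (Q * 2 ^ (t' - s)) (Q * 2 ^ (t' - s) + 2 ^ (t' - s)) := by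
      intro v hv
      have hsup := hsuper v hv
      have hdd : jd u lam v / 2 ^ s / 2 ^ (t' - s) = jd u lam v / 2 ^ t' := by
        rw [Nat.div_div_eq_div_mul, ← pow_add]
        congr 2
        omega
      rw [hsup] at hdd
      have h1 := Nat.div_add_mod' (jd u lam v / 2 ^ s) (2 ^ (t' - s))
      rw [hdd] at h1
      have h2 : (jd u lam v / 2 ^ s) % 2 ^ (t' - s) < 2 ^ (t' - s) :=
        Nat.mod_lt _ (Nat.two_pow_pos _)
      rw [Finset.mem_Ico]
      omega
    have := Finset.card_le_card_of_injOn (fun v => jd u lam v / 2 ^ s)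
      (fun v hv => hmem v hv)
      (by
        intro v hv w hw hvw
        rw [Finset.mem_coe] at hv hw
        exact hinj v hv w hw hvw)
    rw [Nat.card_Ico, Nat.add_sub_cancel_left] at this
    exact this
  have hcard' : (T.card : ℝ) ≤ 2 ^ (t' - s) := by exact_mod_cast hcard
  refine le_trans hcard' ?_
  rw [Real.le_sqrt (by positivity) (by positivity), pow_two_cast_sq, le_div_iff₀ hr]
  -- 4 ^ (t' - s) * r ≤ 32 * R
  have hs8 : r ≤ 8 * lam * 4 ^ s := by
    rcases lt_or_eq_of_le hsm with hlt | heq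
    · have hnp : ¬ P (s + 1) := Nat.findGreatest_is_greatest (Nat.lt_succ_self _) (by omega)
      rw [hPdef] at hnp
      push_neg at hnp
      have h4 : (2:ℝ) * lam * 4 ^ (s + 1) = 8 * lam * 4 ^ s := by ring
      linarith
    · rw [← heq] at hRL
      have h1 : (1:ℝ) ≤ 4 ^ s := one_le_pow₀ (by norm_num)
      nlinarith
  rcases le_or_gt t' t with htt | htt
  · -- t' = t; use minimality of t (if t ≥ 1) else t' = t = 0
    have ht'': t' = t := le_antisymm htt (le_max_right _ _)
    rcases Nat.eq_zero_or_pos t with ht0 | ht0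
    · rw [ht'', ht0]
      simp only [Nat.zero_sub, pow_zero, one_mul]
      linarith
    · have hmin : ¬ (R ≤ lam * 4 ^ (t - 1)) := Nat.find_min hex (by omega)
      push_neg at hmin
      have h4t : (4:ℝ) ^ t = 4 * 4 ^ (t - 1) := by
        rw [← pow_succ']
        congr 1
        omega
      -- 4^(t-s) * r ≤ 4^t / 4^s * (8 lam 4^s) = 8 lam 4^t = 32 lam 4^(t-1) ≤ 32 R
      have hsplit : (4:ℝ) ^ (t' - s) * 4 ^ s = 4 ^ t := by
        rw [← pow_add]
        congr 1
        omega
      have step1 : (4:ℝ) ^ (t' - s) * r ≤ 4 ^ (t' - s) * (8 * lam * 4 ^ s) :=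
        mul_le_mul_of_nonneg_left hs8 (by positivity)
      have step2 : (4:ℝ) ^ (t' - s) * (8 * lam * 4 ^ s) = 8 * lam * 4 ^ t := by
        rw [← hsplit]; ring
      have step3 : (8:ℝ) * lam * 4 ^ t = 32 * (lam * 4 ^ (t - 1)) := by
        rw [h4t]; ring
      nlinarith
  · -- t < t' means t' = s, so card bound is 1 and r ≤ R suffices
    have ht'' : t' = s := by omega
    rw [ht'']
    simp only [Nat.sub_self, pow_zero, one_mul]
    linarith

/-! ### the concrete set E -/

noncomputable def lamk (k : ℕ) : ℝ := (1/2 : ℝ) ^ (k + 2 * k ^ 2)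

noncomputable def pk (k j : ℕ) : E2 := bp ((1/2 : ℝ) ^ k) (lamk k) j

def ESet : Set E2 := {v | ∃ k, 1 ≤ k ∧ ∃ j < 2 ^ k ^ 2, v = pk k j}

lemma lamk_pos (k : ℕ) : 0 < lamk k := by unfold lamk; positivity

lemma lam4m (k : ℕ) : lamk k * 4 ^ (k ^ 2) = (1/2 : ℝ) ^ k := by
  unfold lamk
  rw [pow_add, mul_assoc]
  have : ((1/2 : ℝ)) ^ (2 * k ^ 2) * 4 ^ (k ^ 2) = 1 := by
    rw [pow_mul, ← mul_pow]
    norm_num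
  rw [this, mul_one]

lemma lam2m (k : ℕ) : lamk k * 2 ^ (k ^ 2) = (1/2 : ℝ) ^ (k + k ^ 2) := by
  unfold lamk
  rw [pow_add, pow_add, mul_assoc]
  have : ((1/2 : ℝ)) ^ (2 * k ^ 2) * 2 ^ (k ^ 2) = (1/2) ^ (k ^ 2) := by
    rw [two_mul, pow_add, mul_assoc]
    have : ((1/2 : ℝ)) ^ (k ^ 2) * 2 ^ (k ^ 2) = 1 := by
      rw [← mul_pow]; norm_num
    rw [this, mul_one]
  rw [this]

lemma half_pow_le {a b : ℕ} (h : a ≤ b) : (1/2 : ℝ) ^ b ≤ (1/2) ^ a :=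
  pow_le_pow_of_le_one (by norm_num) (by norm_num) h

lemma half_pow_pos (a : ℕ) : (0:ℝ) < (1/2) ^ a := by positivity

lemma half_pow_lt_of_lt {a b : ℕ} (h : a < b) : (1/2 : ℝ) ^ b < (1/2) ^ a := by
  have h1 : (1/2 : ℝ) ^ b ≤ (1/2) ^ (a + 1) := half_pow_le h
  have h2 : (1/2 : ℝ) ^ (a+1) < (1/2) ^ a := by
    rw [pow_succ]
    nlinarith [half_pow_pos a]
  linarith

lemma lt_of_half_pow_lt {a b : ℕ} (h : (1/2 : ℝ) ^ b < (1/2) ^ a) : a < b := by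
  by_contra hc
  push_neg at hc
  exact absurd (half_pow_le hc) (not_le.mpr h)

lemma pk0_lb {k j : ℕ} : (1/2 : ℝ) ^ k ≤ pk k j 0 := by
  show (1/2 : ℝ) ^ k ≤ (1/2 : ℝ) ^ k + j * lamk k
  have h := lamk_pos k
  have : (0:ℝ) ≤ (j:ℝ) * lamk k := by positivity
  linarith

lemma pk0_ub {k j : ℕ} (hk : 1 ≤ k) (hj : j < 2 ^ k ^ 2) :
    pk k j 0 ≤ (3/2 : ℝ) * (1/2) ^ k := by
  show (1/2 : ℝ) ^ k + j * lamk k ≤ (3/2 : ℝ) * (1/2) ^ k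
  have h1 : (j : ℝ) * lamk k ≤ 2 ^ k ^ 2 * lamk k := by
    apply mul_le_mul_of_nonneg_right _ (lamk_pos k).le
    exact_mod_cast hj.le
  have h2 : (2:ℝ) ^ k ^ 2 * lamk k = (1/2 : ℝ) ^ (k + k ^ 2) := by
    rw [mul_comm]; exact lam2m k
  have h3 : (1/2 : ℝ) ^ (k + k ^ 2) ≤ (1/2) ^ (k + 1) := half_pow_le (by nlinarith)
  have h4 : (1/2 : ℝ) ^ (k + 1) = (1/2) * (1/2) ^ k := by rw [pow_succ]; ring
  linarith

lemma pk1_lb {k j : ℕ} : 0 ≤ pk k j 1 := by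
  show (0:ℝ) ≤ 3 * lamk k * g j
  have := lamk_pos k
  positivity

lemma pk1_ub {k j : ℕ} (hj : j < 2 ^ k ^ 2) : pk k j 1 < (1/2 : ℝ) ^ k := by
  show 3 * lamk k * (g j : ℝ) < (1/2 : ℝ) ^ k
  have hb : 3 * g j + 1 ≤ 4 ^ k ^ 2 := g_bound (k ^ 2) j hj
  have hb' : 3 * (g j : ℝ) + 1 ≤ 4 ^ k ^ 2 := by exact_mod_cast hb
  have := lamk_pos k
  calc 3 * lamk k * (g j : ℝ) = lamk k * (3 * (g j : ℝ)) := by ring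
    _ ≤ lamk k * (4 ^ k ^ 2 - 1) := by nlinarith
    _ < lamk k * 4 ^ k ^ 2 := by nlinarith
    _ = (1/2 : ℝ) ^ k := lam4m k

/-- cleaner: K ≤ k and k ≤ K separately -/
lemma block_id {k K j : ℕ} (hk : 1 ≤ k) (hK : 1 ≤ K) (hj : j < 2 ^ k ^ 2)
    (h1 : (1/2 : ℝ) ^ K ≤ pk k j 0) (h2 : pk k j 0 < (1/2 : ℝ) ^ (K - 1)) : k = K := by
  have hlb := pk0_lb (k := k) (j := j)
  have hub := pk0_ub hk hj
  -- K - 1 < k  (i.e. K ≤ k): (1/2)^k ≤ pk0 < (1/2)^(K-1)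
  have hKk : K - 1 < k := lt_of_half_pow_lt (lt_of_le_of_lt hlb h2)
  -- k - 1 < K : (1/2)^K ≤ pk0 ≤ (3/2)(1/2)^k < (1/2)^(k-1)
  have h3 : (3/2 : ℝ) * (1/2) ^ k < (1/2) ^ (k - 1) := by
    have : (1/2 : ℝ) ^ (k - 1) = 2 * (1/2) ^ k := by
      have hk' : k - 1 + 1 = k := by omega
      calc (1/2 : ℝ) ^ (k-1) = 2 * ((1/2) * (1/2) ^ (k-1)) := by ring
        _ = 2 * (1/2) ^ (k - 1 + 1) := by rw [pow_succ]; ring_nf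
        _ = 2 * (1/2) ^ k := by rw [hk']
    nlinarith [half_pow_pos k]
  have hkK : k - 1 < K := lt_of_half_pow_lt (lt_of_le_of_lt h1 (lt_of_le_of_lt hub h3))
  omega

lemma ESet_coord_pos {v : E2} (hv : v ∈ ESet) : 0 < v 0 ∧ 0 ≤ v 1 ∧ v 1 < v 0 := by
  obtain ⟨k, hk, j, hj, rfl⟩ := hv
  refine ⟨lt_of_lt_of_le (half_pow_pos k) pk0_lb, pk1_lb, ?_⟩
  exact lt_of_lt_of_le (pk1_ub hj) pk0_lb

lemma cluster_count {r : ℝ} (hr : 0 < r) (T : Finset E2)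
    (hT : ∀ v ∈ T, v ∈ ESet ∧ v 0 ≤ 2 * r)
    (hsep : ∀ v ∈ T, ∀ w ∈ T, v ≠ w → r < dist v w) :
    (T.card : ℝ) ≤ 25 := by
  classical
  have hcard : T.card ≤ 25 := by
    have hle := Finset.card_le_card_of_injOn
      (fun v => (⌊v 0 / (r/2)⌋₊, ⌊v 1 / (r/2)⌋₊))
      (s := T) (t := Finset.range 5 ×ˢ Finset.range 5)
      (by
        intro v hv
        obtain ⟨hvE, hv2r⟩ := hT v hv
        obtain ⟨h0, h1, h10⟩ := ESet_coord_pos hvE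
        simp only [Finset.mem_coe, Finset.mem_product, Finset.mem_range]
        constructor
        · have h5 : v 0 / (r/2) < 5 := by
            rw [div_lt_iff₀ (by linarith)]
            linarith
          exact (Nat.floor_lt (by positivity)).mpr (by push_cast; linarith)
        · have h5 : v 1 / (r/2) < 5 := by
            rw [div_lt_iff₀ (by linarith)]
            linarith
          exact (Nat.floor_lt (by positivity)).mpr (by push_cast; linarith)
        )
      (by
        intro v hv w hw hvw
        rw [Finset.mem_coe] at hv hw
        simp only [Prod.mk.injEq] at hvw
        obtain ⟨hvw0, hvw1⟩ := hvw
        by_contra hne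
        obtain ⟨hvE, hv2r⟩ := hT v hv
        obtain ⟨hwE, hw2r⟩ := hT w hw
        obtain ⟨hv0, hv1, _⟩ := ESet_coord_pos hvE
        obtain ⟨hw0, hw1, _⟩ := ESet_coord_pos hwE
        have hr2 : (0:ℝ) < r / 2 := by linarith
        have key : ∀ a b : ℝ, 0 ≤ a → 0 ≤ b → ⌊a / (r/2)⌋₊ = ⌊b / (r/2)⌋₊ →
            |a - b| < r / 2 := by
          intro a b ha hb hab
          have ha1 : (⌊a / (r/2)⌋₊ : ℝ) ≤ a / (r/2) := Nat.floor_le (by positivity)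
          have ha2 : a / (r/2) < ⌊a / (r/2)⌋₊ + 1 := Nat.lt_floor_add_one _
          have hb1 : (⌊b / (r/2)⌋₊ : ℝ) ≤ b / (r/2) := Nat.floor_le (by positivity)
          have hb2 : b / (r/2) < ⌊b / (r/2)⌋₊ + 1 := Nat.lt_floor_add_one _
          rw [hab] at ha1 ha2
          have ha2' : a < (↑⌊b / (r/2)⌋₊ + 1) * (r/2) := (div_lt_iff₀ hr2).mp ha2
          have hb2' : b < (↑⌊b / (r/2)⌋₊ + 1) * (r/2) := (div_lt_iff₀ hr2).mp hb2
          have ha1' : (↑⌊b / (r/2)⌋₊ : ℝ) * (r/2) ≤ a := (le_div_iff₀ hr2).mp ha1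
          have hb1' : (↑⌊b / (r/2)⌋₊ : ℝ) * (r/2) ≤ b := (le_div_iff₀ hr2).mp hb1
          rw [abs_sub_lt_iff]
          constructor <;> nlinarith
        have k0 := key _ _ hv0.le hw0.le hvw0
        have k1 := key _ _ hv1 hw1 hvw1
        have hd : dist v w ≤ |v 0 - w 0| + |v 1 - w 1| := dist_coords v w
        have := hsep v hv w hw hne
        linarith)
    simpa using hle
  exact_mod_cast hcard

lemma sqrt_half_pow (k : ℕ) : Real.sqrt ((1/2 : ℝ) ^ k) = (Real.sqrt (1/2)) ^ k := by
  induction k with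
  | zero => simp
  | succ n ih =>
    rw [pow_succ, pow_succ, Real.sqrt_mul (by positivity), ih]

lemma geom_tail_bound (k0 K : ℕ) :
    ∑ k ∈ Finset.Ico k0 K, (Real.sqrt (1/2)) ^ k ≤ 4 * Real.sqrt ((1/2 : ℝ) ^ k0) := by
  set q := Real.sqrt (1/2) with hq
  have hq0 : 0 ≤ q := Real.sqrt_nonneg _
  have hq2 : q ^ 2 = 1/2 := Real.sq_sqrt (by norm_num)
  have hq34 : q ≤ 3/4 := by nlinarith
  rcases le_or_gt K k0 with h | h
  · rw [Finset.Ico_eq_empty (by omega)]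
    simp only [Finset.sum_empty]
    positivity
  · rw [Finset.sum_Ico_eq_sum_range]
    have : ∑ i ∈ Finset.range (K - k0), q ^ (k0 + i) = q ^ k0 * ∑ i ∈ Finset.range (K - k0), q ^ i := by
      rw [Finset.mul_sum]
      congr 1
      ext i
      rw [pow_add]
    rw [this, sqrt_half_pow]
    have hsum : ∑ i ∈ Finset.range (K - k0), q ^ i ≤ 4 := by
      have hg := geom_sum_mul q (K - k0)
      have hqn : 0 ≤ q ^ (K - k0) := by positivity
      have hsumnn : 0 ≤ ∑ i ∈ Finset.range (K - k0), q ^ i :=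
        Finset.sum_nonneg fun i _ => by positivity
      nlinarith [hg]
    have hqk : 0 ≤ q ^ k0 := by positivity
    nlinarith

lemma half_pow_pred {k : ℕ} (hk : 1 ≤ k) : (3/2 : ℝ) * (1/2) ^ k < (1/2) ^ (k - 1) := by
  have hid : (1/2 : ℝ) ^ (k - 1) = 2 * (1/2) ^ k := by
    have hk' : k - 1 + 1 = k := by omega
    calc (1/2 : ℝ) ^ (k-1) = 2 * ((1/2) * (1/2) ^ (k-1)) := by ring
      _ = 2 * (1/2) ^ (k - 1 + 1) := by rw [pow_succ]; ring_nf
      _ = 2 * (1/2) ^ k := by rw [hk']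
  nlinarith [half_pow_pos k]

lemma sqrt_nine : Real.sqrt (9:ℝ) = 3 := by
  rw [show (9:ℝ) = 3^2 by norm_num, Real.sqrt_sq (by norm_num)]

lemma sqrt_36 : Real.sqrt (36:ℝ) = 6 := by
  rw [show (36:ℝ) = 6^2 by norm_num, Real.sqrt_sq (by norm_num)]

set_option maxHeartbeats 1000000 in
lemma global_count {x : E2} {r R : ℝ} (hr : 0 < r) (hrR : r ≤ R)
    (T : Finset E2) (hTE : ↑T ⊆ ESet ∩ closedBall x R)
    (hsep : ∀ v ∈ T, ∀ w ∈ T, v ≠ w → r < dist v w) :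
    (T.card : ℝ) ≤ 100 * Real.sqrt (R / r) := by
  classical
  have hR : 0 < R := lt_of_lt_of_le hr hrR
  have hsq1 : 1 ≤ Real.sqrt (R / r) := by
    rw [show (1:ℝ) = Real.sqrt 1 by rw [Real.sqrt_one]]
    apply Real.sqrt_le_sqrt
    rw [le_div_iff₀ hr]
    linarith
  have hsq0 : 0 ≤ Real.sqrt (R / r) := Real.sqrt_nonneg _
  obtain ⟨K, hK⟩ : ∃ n : ℕ, (1/2 : ℝ) ^ n < r := exists_pow_lt_of_lt_one hr (by norm_num)
  have hexk0 : ∃ n : ℕ, (1/2 : ℝ) ^ n ≤ R := ⟨K, le_trans hK.le hrR⟩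
  set k0 := Nat.find hexk0 with hk0def
  have hk0R : (1/2 : ℝ) ^ k0 ≤ R := Nat.find_spec hexk0
  set Tc := T.filter (fun v => v 0 ≤ 2 * r) with hTcdef
  set Tk : ℕ → Finset E2 :=
    fun k => T.filter (fun v => (1/2 : ℝ) ^ k ≤ v 0 ∧ v 0 < (1/2 : ℝ) ^ (k - 1)) with hTkdef
  set Ks := (Finset.Ico 1 K).filter (fun k => r < (1/2 : ℝ) ^ k) with hKsdef
  have hdec : ∀ v ∈ T, ∃ k, 1 ≤ k ∧ ∃ j < 2 ^ k ^ 2, v = pk k j := fun v hv => (hTE hv).1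
  have hballs : ∀ v ∈ T, dist v x ≤ R := fun v hv => mem_closedBall.mp (hTE hv).2
  have hKs1le : ∀ k ∈ Ks, 1 ≤ k ∧ r < (1/2 : ℝ) ^ k := by
    intro k hk
    rw [hKsdef] at hk
    simp only [Finset.mem_filter, Finset.mem_Ico] at hk
    exact ⟨hk.1.1, hk.2⟩
  have hTkmem : ∀ k v, v ∈ Tk k ↔ v ∈ T ∧ (1/2 : ℝ) ^ k ≤ v 0 ∧ v 0 < (1/2 : ℝ) ^ (k - 1) := by
    intro k v
    rw [hTkdef]
    simp only [Finset.mem_filter]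
  have hcover : T ⊆ Tc ∪ Ks.biUnion Tk := by
    intro v hv
    obtain ⟨k, hk1, j, hj, rfl⟩ := hdec v hv
    by_cases hsmall : (1/2 : ℝ) ^ k ≤ r
    · apply Finset.mem_union_left
      rw [hTcdef]
      simp only [Finset.mem_filter]
      refine ⟨hv, ?_⟩
      calc pk k j 0 ≤ (3/2 : ℝ) * (1/2) ^ k := pk0_ub hk1 hj
        _ ≤ 2 * (1/2 : ℝ) ^ k := by nlinarith [half_pow_pos k]
        _ ≤ 2 * r := by nlinarith
    · push_neg at hsmall
      apply Finset.mem_union_right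
      rw [Finset.mem_biUnion]
      refine ⟨k, ?_, ?_⟩
      · rw [hKsdef]
        simp only [Finset.mem_filter, Finset.mem_Ico]
        exact ⟨⟨hk1, lt_of_half_pow_lt (lt_trans hK hsmall)⟩, hsmall⟩
      · rw [hTkmem]
        refine ⟨hv, pk0_lb, ?_⟩
        calc pk k j 0 ≤ (3/2 : ℝ) * (1/2) ^ k := pk0_ub hk1 hj
          _ < (1/2 : ℝ) ^ (k - 1) := half_pow_pred hk1
  have hc1 : (T.card : ℝ) ≤ (Tc.card : ℝ) + ∑ k ∈ Ks, ((Tk k).card : ℝ) := by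
    have h1 : T.card ≤ Tc.card + ∑ k ∈ Ks, (Tk k).card := by
      calc T.card ≤ (Tc ∪ Ks.biUnion Tk).card := Finset.card_le_card hcover
        _ ≤ Tc.card + (Ks.biUnion Tk).card := Finset.card_union_le _ _
        _ ≤ Tc.card + ∑ k ∈ Ks, (Tk k).card :=
            Nat.add_le_add_left Finset.card_biUnion_le _
    calc (T.card : ℝ) ≤ ((Tc.card + ∑ k ∈ Ks, (Tk k).card : ℕ) : ℝ) := by exact_mod_cast h1
      _ = (Tc.card : ℝ) + ∑ k ∈ Ks, ((Tk k).card : ℝ) := by push_cast; ring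
  have hTcb : (Tc.card : ℝ) ≤ 25 := by
    apply cluster_count hr
    · intro v hv
      rw [hTcdef] at hv
      simp only [Finset.mem_filter] at hv
      exact ⟨(hTE hv.1).1, hv.2⟩
    · intro v hv w hw hne
      rw [hTcdef] at hv hw
      exact hsep v (Finset.filter_subset _ _ hv) w (Finset.filter_subset _ _ hw) hne
  have hTkdata : ∀ k, 1 ≤ k → ∀ v ∈ Tk k,
      (∃ j < 2 ^ k ^ 2, v = bp ((1/2:ℝ) ^ k) (lamk k) j) ∧ dist v x ≤ R := by
    intro k hk1 v hv
    rw [hTkmem] at hv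
    obtain ⟨hvT, hvl, hvu⟩ := hv
    obtain ⟨k', hk', j, hj, rfl⟩ := hdec v hvT
    have hkk : k' = k := block_id hk' hk1 hj hvl hvu
    subst hkk
    exact ⟨⟨j, hj, rfl⟩, hballs _ hvT⟩
  have hsepk : ∀ k, ∀ v ∈ Tk k, ∀ w ∈ Tk k, v ≠ w → r < dist v w := by
    intro k v hv w hw hne
    rw [hTkdef] at hv hw
    exact hsep v (Finset.filter_subset _ _ hv) w (Finset.filter_subset _ _ hw) hne
  set Ks1 := Ks.filter (fun k => (1/2:ℝ) ^ k ≤ R) with hKs1def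
  set Ks2 := Ks.filter (fun k => ¬ ((1/2:ℝ) ^ k ≤ R)) with hKs2def
  have hsplitKs : ∑ k ∈ Ks, ((Tk k).card : ℝ)
      = ∑ k ∈ Ks1, ((Tk k).card : ℝ) + ∑ k ∈ Ks2, ((Tk k).card : ℝ) :=
    (Finset.sum_filter_add_sum_filter_not Ks _ _).symm
  have hmed : ∀ k ∈ Ks1, ((Tk k).card : ℝ) ≤ 3 * (Real.sqrt (1/2)) ^ k / Real.sqrt r := by
    intro k hk
    have hkKs : k ∈ Ks := Finset.filter_subset _ _ hk
    obtain ⟨hk1, hkr⟩ := hKs1le k hkKs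
    have hbca := block_count_a (u := (1/2:ℝ)^k) (lamk_pos k) hr
      (by rw [lam4m k]; nlinarith [half_pow_pos k])
      (Tk k) (fun v hv => (hTkdata k hk1 v hv).1) (hsepk k)
    rw [lam4m k] at hbca
    refine le_trans hbca ?_
    have h9 : Real.sqrt (9 * (1/2:ℝ) ^ k / r) = 3 * (Real.sqrt (1/2)) ^ k / Real.sqrt r := by
      rw [Real.sqrt_div (by positivity), Real.sqrt_mul (by norm_num), sqrt_nine,
        sqrt_half_pow]
    calc Real.sqrt (8 * (1/2:ℝ) ^ k / r) ≤ Real.sqrt (9 * (1/2:ℝ) ^ k / r) := by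
          apply Real.sqrt_le_sqrt
          apply (div_le_div_iff_of_pos_right hr).mpr
          nlinarith [half_pow_pos k]
      _ = _ := h9
  have hmedsum : ∑ k ∈ Ks1, ((Tk k).card : ℝ) ≤ 12 * Real.sqrt (R/r) := by
    have hsub : Ks1 ⊆ Finset.Ico k0 K := by
      intro k hk
      rw [hKs1def] at hk
      simp only [Finset.mem_filter] at hk
      obtain ⟨hkKs, hkR⟩ := hk
      rw [hKsdef] at hkKs
      simp only [Finset.mem_filter, Finset.mem_Ico] at hkKs
      rw [Finset.mem_Ico]
      exact ⟨Nat.find_min' hexk0 hkR, hkKs.1.2⟩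
    calc ∑ k ∈ Ks1, ((Tk k).card : ℝ)
        ≤ ∑ k ∈ Ks1, 3 * (Real.sqrt (1/2)) ^ k / Real.sqrt r := Finset.sum_le_sum hmed
      _ ≤ ∑ k ∈ Finset.Ico k0 K, 3 * (Real.sqrt (1/2)) ^ k / Real.sqrt r := by
          apply Finset.sum_le_sum_of_subset_of_nonneg hsub
          intro k _ _
          positivity
      _ = (3 / Real.sqrt r) * ∑ k ∈ Finset.Ico k0 K, (Real.sqrt (1/2)) ^ k := by
          rw [Finset.mul_sum]
          apply Finset.sum_congr rfl
          intro k _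
          ring
      _ ≤ (3 / Real.sqrt r) * (4 * Real.sqrt ((1/2:ℝ) ^ k0)) :=
          mul_le_mul_of_nonneg_left (geom_tail_bound k0 K) (by positivity)
      _ ≤ (3 / Real.sqrt r) * (4 * Real.sqrt R) := by
          apply mul_le_mul_of_nonneg_left ?_ (by positivity)
          exact mul_le_mul_of_nonneg_left (Real.sqrt_le_sqrt hk0R) (by norm_num)
      _ = 12 * (Real.sqrt R / Real.sqrt r) := by ring
      _ = 12 * Real.sqrt (R/r) := by rw [Real.sqrt_div hR.le]
  have hbigsum : ∑ k ∈ Ks2, ((Tk k).card : ℝ) ≤ 12 * Real.sqrt (R/r) := by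
    set Ks2' := Ks2.filter (fun k => (Tk k).Nonempty) with hKs2'def
    have hzero : ∑ k ∈ Ks2, ((Tk k).card : ℝ) = ∑ k ∈ Ks2', ((Tk k).card : ℝ) := by
      symm
      apply Finset.sum_subset (Finset.filter_subset _ _)
      intro k hk hnk
      have h0 : ¬ (Tk k).Nonempty := by
        intro hne
        exact hnk (Finset.mem_filter.mpr ⟨hk, hne⟩)
      rw [Finset.not_nonempty_iff_eq_empty] at h0
      rw [h0]
      simp
    have hterm : ∀ k ∈ Ks2', ((Tk k).card : ℝ) ≤ 6 * Real.sqrt (R / r) := by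
      intro k hk
      have hkKs2 : k ∈ Ks2 := Finset.filter_subset _ _ hk
      rw [hKs2def] at hkKs2
      simp only [Finset.mem_filter] at hkKs2
      obtain ⟨hkKs, hkR⟩ := hkKs2
      push_neg at hkR
      obtain ⟨hk1, hkr⟩ := hKs1le k hkKs
      have hbcb := block_count_b (u := (1/2:ℝ)^k) (lamk_pos k) hr hrR
        (by rw [lam4m k]; exact hkR.le) x (Tk k)
        (fun v hv => hTkdata k hk1 v hv) (hsepk k)
      refine le_trans hbcb ?_
      have h36 : (32:ℝ) * R / r ≤ 36 * (R / r) := by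
        rw [show (36:ℝ) * (R/r) = 36 * R / r by ring]
        apply (div_le_div_iff_of_pos_right hr).mpr
        nlinarith
      calc Real.sqrt (32 * R / r) ≤ Real.sqrt (36 * (R/r)) := Real.sqrt_le_sqrt h36
        _ = 6 * Real.sqrt (R/r) := by rw [Real.sqrt_mul (by norm_num), sqrt_36]
    have hcard2 : Ks2'.card ≤ 2 := by
      rcases Ks2'.eq_empty_or_nonempty with he | hne
      · rw [he]; simp
      · set a := Ks2'.min' hne with ha
        have hamem : a ∈ Ks2' := Ks2'.min'_mem hne
        have hsub2 : Ks2' ⊆ Finset.Icc a (a + 1) := by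
          intro k hk
          rw [Finset.mem_Icc]
          refine ⟨Ks2'.min'_le k hk, ?_⟩
          by_contra hc
          push_neg at hc
          have hane : (Tk a).Nonempty := by
            have h' := hamem
            rw [hKs2'def] at h'
            exact (Finset.mem_filter.mp h').2
          have hkne : (Tk k).Nonempty := by
            have h' := hk
            rw [hKs2'def] at h'
            exact (Finset.mem_filter.mp h').2
          obtain ⟨v1, hv1⟩ := hane
          obtain ⟨v2, hv2⟩ := hkne
          have haKs2 : a ∈ Ks2 := Finset.filter_subset _ _ hamem
          have hkKs2 : k ∈ Ks2 := Finset.filter_subset _ _ hk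
          rw [hKs2def] at haKs2 hkKs2
          simp only [Finset.mem_filter] at haKs2 hkKs2
          obtain ⟨ha1, hale⟩ := hKs1le a haKs2.1
          obtain ⟨hk1, hkle⟩ := hKs1le k hkKs2.1
          have hRk : R < (1/2:ℝ) ^ k := by
            have := hkKs2.2
            push_neg at this
            exact this
          rw [hTkmem] at hv1 hv2
          have h1l : (1/2:ℝ) ^ a ≤ v1 0 := hv1.2.1
          have hv2Tk : v2 ∈ Tk k := by rw [hTkmem]; exact hv2
          have hv1Tk : v1 ∈ Tk a := by rw [hTkmem]; exact hv1
          obtain ⟨⟨j2, hj2, hveq2⟩, hd2⟩ := hTkdata k hk1 v2 hv2Tk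
          have h2u : v2 0 ≤ (3/2:ℝ) * (1/2) ^ k := by
            rw [hveq2]; exact pk0_ub hk1 hj2
          have hd1 : dist v1 x ≤ R := (hTkdata a ha1 v1 hv1Tk).2
          have hdist : dist v1 v2 ≤ 2 * R :=
            le_trans (dist_triangle_right v1 v2 x) (by linarith)
          have hcoord : |v1 0 - v2 0| ≤ dist v1 v2 := coord0_le_dist v1 v2
          have hks : (1/2:ℝ) ^ k ≤ (1/4) * (1/2) ^ a := by
            calc (1/2:ℝ) ^ k ≤ (1/2) ^ (a+2) := half_pow_le (by omega)
              _ = (1/4) * (1/2)^a := by rw [pow_add]; ring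
          have habs : v1 0 - v2 0 ≥ (5/8 : ℝ) * (1/2)^a := by nlinarith
          have hfin : (5/8 : ℝ) * (1/2)^a ≤ 2 * R := by
            calc (5/8 : ℝ) * (1/2)^a ≤ v1 0 - v2 0 := habs
              _ ≤ |v1 0 - v2 0| := le_abs_self _
              _ ≤ 2 * R := le_trans hcoord hdist
          have hRa : R < (1/2:ℝ) ^ a := by
            have := haKs2.2
            push_neg at this
            exact this
          nlinarith [half_pow_pos a]
        calc Ks2'.card ≤ (Finset.Icc a (a+1)).card := Finset.card_le_card hsub2
          _ = 2 := by rw [Nat.card_Icc]; omega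
    calc ∑ k ∈ Ks2, ((Tk k).card : ℝ) = ∑ k ∈ Ks2', ((Tk k).card : ℝ) := hzero
      _ ≤ ∑ _k ∈ Ks2', 6 * Real.sqrt (R/r) := Finset.sum_le_sum hterm
      _ = Ks2'.card * (6 * Real.sqrt (R/r)) := by
          rw [Finset.sum_const, nsmul_eq_mul]
      _ ≤ 2 * (6 * Real.sqrt (R/r)) := by
          apply mul_le_mul_of_nonneg_right ?_ (by positivity)
          exact_mod_cast hcard2
      _ = 12 * Real.sqrt (R/r) := by ring
  calc (T.card : ℝ) ≤ (Tc.card : ℝ) + ∑ k ∈ Ks, ((Tk k).card : ℝ) := hc1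
    _ = (Tc.card : ℝ) + (∑ k ∈ Ks1, ((Tk k).card : ℝ) + ∑ k ∈ Ks2, ((Tk k).card : ℝ)) := by
        rw [hsplitKs]
    _ ≤ 25 + (12 * Real.sqrt (R/r) + 12 * Real.sqrt (R/r)) :=
        add_le_add hTcb (add_le_add hmedsum hbigsum)
    _ ≤ 100 * Real.sqrt (R/r) := by nlinarith

lemma ESet_bounded : Bornology.IsBounded ESet := by
  apply (Metric.isBounded_closedBall (x := (0:E2)) (r := 2)).subset
  intro v hv
  obtain ⟨k, hk, j, hj, rfl⟩ := hv
  rw [mem_closedBall]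
  have h1 : pk k j 0 ≤ (3/2 : ℝ) * (1/2) ^ k := pk0_ub hk hj
  have h2 : (1/2:ℝ) ^ k ≤ 1/2 := by
    calc (1/2:ℝ) ^ k ≤ (1/2) ^ 1 := half_pow_le hk
      _ = 1/2 := by norm_num
  have h3 : pk k j 1 < (1/2:ℝ) ^ k := pk1_ub hj
  have h0 : (0:ℝ) ≤ pk k j 0 := le_trans (half_pow_pos k).le pk0_lb
  have h4 : (0:ℝ) ≤ pk k j 1 := pk1_lb
  calc dist (pk k j) 0 ≤ |pk k j 0 - (0:E2) 0| + |pk k j 1 - (0:E2) 1| := dist_coords _ _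
    _ = |pk k j 0| + |pk k j 1| := by norm_num
    _ ≤ 2 := by
        rw [abs_of_nonneg h0, abs_of_nonneg h4]
        nlinarith

lemma ESet_nonempty : ESet.Nonempty := ⟨pk 1 0, 1, le_refl 1, 0, by norm_num, rfl⟩

lemma coverNum_window_E {x : E2} {r R : ℝ} (hr : 0 < r) (hrR : r ≤ R) :
    (coverNum (ESet ∩ closedBall x R) r : ℝ) ≤ 100 * Real.sqrt (R / r) := by
  have hb : (0:ℝ) ≤ 100 * Real.sqrt (R/r) := by positivity
  have hN : coverNum (ESet ∩ closedBall x R) r ≤ ⌊100 * Real.sqrt (R / r)⌋₊ := by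
    apply coverNum_le_of_sep hr
    intro T hT hsep
    exact Nat.le_floor (global_count hr hrR T hT hsep)
  calc (coverNum (ESet ∩ closedBall x R) r : ℝ) ≤ (⌊100 * Real.sqrt (R / r)⌋₊ : ℝ) := by
        exact_mod_cast hN
    _ ≤ 100 * Real.sqrt (R/r) := Nat.floor_le hb

lemma coverNumLoc_E {r R : ℝ} (hr : 0 < r) (hrR : r ≤ R) :
    (coverNumLoc ESet r R : ℝ) ≤ 100 * Real.sqrt (R / r) :=
  coverNumLoc_le (by positivity) (fun _x _hx => coverNum_window_E hr hrR)

lemma half_pow_eq_rpow (a : ℕ) : (1/2:ℝ) ^ a = (2:ℝ) ^ (-(a:ℝ)) := by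
  rw [one_div, inv_pow, ← Real.rpow_natCast 2 a, ← Real.rpow_neg (by norm_num : (0:ℝ) ≤ 2)]

lemma exists_rpow_big (c : ℝ) : ∃ K : ℕ, ∀ y : ℝ, (K:ℝ) ≤ y → c < (2:ℝ) ^ y := by
  rcases le_or_gt c 0 with hc | hc
  · exact ⟨0, fun y _ => lt_of_le_of_lt hc (Real.rpow_pos_of_pos two_pos y)⟩
  · obtain ⟨K, hK⟩ := exists_nat_gt (Real.log c / Real.log 2)
    refine ⟨K, fun y hy => ?_⟩
    have hlog2 : 0 < Real.log 2 := Real.log_pos (by norm_num)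
    have h1 : Real.log c < y * Real.log 2 := by
      have h2 : Real.log c / Real.log 2 < y := lt_of_lt_of_le hK hy
      calc Real.log c = (Real.log c / Real.log 2) * Real.log 2 := by field_simp
        _ < y * Real.log 2 := by nlinarith
    calc c = Real.exp (Real.log c) := (Real.exp_log hc).symm
      _ < Real.exp (y * Real.log 2) := Real.exp_lt_exp.mpr h1
      _ = (2:ℝ) ^ y := by rw [Real.rpow_def_of_pos (by norm_num)]; ring_nf

/-- positivity of R under the admissibility constraints -/
lemma R_pos {r R δ : ℝ} (hr : 0 < r) (h1 : r ≤ R ^ (1+δ)) (h2 : R ^ (1+δ) ≤ R) : 0 < R :=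
  lt_of_lt_of_le hr (le_trans h1 h2)

set_option maxHeartbeats 1000000 in
lemma hUpper_E {δ : ℝ} (hδ0 : 0 < δ) (hδ1 : δ < 1) : hUpper ESet δ = 1/2 := by
  classical
  have hmem : ∀ α : ℝ, 1/2 ≤ α → α ∈ {α : ℝ | 0 ≤ α ∧ ∃ b c : ℝ, 0 < b ∧ 0 < c ∧
      ∀ r R : ℝ, 0 < r → r ≤ R ^ (1 + δ) → R ^ (1 + δ) ≤ R → R ≤ b →
      (coverNumLoc ESet r R : ℝ) ≤ c * (R / r) ^ α} := by
    intro α hα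
    refine ⟨by linarith, 1, 100, one_pos, by norm_num, ?_⟩
    intro r R hr hrR1 hR1 _hRb
    have hRpos : 0 < R := R_pos hr hrR1 hR1
    have hrR : r ≤ R := le_trans hrR1 hR1
    have hRr1 : (1:ℝ) ≤ R / r := by rw [le_div_iff₀ hr]; linarith
    calc (coverNumLoc ESet r R : ℝ) ≤ 100 * Real.sqrt (R/r) := coverNumLoc_E hr hrR
      _ = 100 * (R/r) ^ (1/2 : ℝ) := by rw [Real.sqrt_eq_rpow]
      _ ≤ 100 * (R/r) ^ α := by
          apply mul_le_mul_of_nonneg_left ?_ (by norm_num)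
          exact Real.rpow_le_rpow_of_exponent_le hRr1 hα
  apply le_antisymm
  · exact csInf_le ⟨0, fun β hβ => hβ.1⟩ (hmem (1/2) (le_refl _))
  · apply le_csInf ⟨1/2, hmem (1/2) (le_refl _)⟩
    rintro β ⟨hβ0, b, c, hb, hc, hbound⟩
    by_contra hlt
    push_neg at hlt
    set ε : ℝ := 1 - 2*β with hεdef
    have hε : 0 < ε := by simp only [hεdef]; linarith
    obtain ⟨Kb, hKb⟩ : ∃ n : ℕ, (1/2:ℝ) ^ n < b := exists_pow_lt_of_lt_one hb (by norm_num)
    obtain ⟨Kc, hKc⟩ := exists_rpow_big c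
    obtain ⟨kc, hkc⟩ := exists_nat_gt (((Kc:ℝ) + 1) / ε)
    set k := max (Kb + 1) (max kc 1) with hkdef
    have hk1 : 1 ≤ k := le_trans (le_max_right kc 1) (le_max_right _ _)
    have hkKb : Kb + 1 ≤ k := le_max_left _ _
    have hkkc : kc ≤ k := le_trans (le_max_left kc 1) (le_max_right _ _)
    set r : ℝ := lamk k with hrdef
    set R : ℝ := (1/2:ℝ) ^ (k-1) with hRdef
    have hr : 0 < r := lamk_pos k
    have hRpos : 0 < R := half_pow_pos _
    have hR1 : R ≤ 1 := by
      calc R ≤ (1/2:ℝ) ^ 0 := half_pow_le (Nat.zero_le _)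
        _ = 1 := by norm_num
    have hRb : R ≤ b := by
      calc R ≤ (1/2:ℝ) ^ Kb := half_pow_le (by omega)
        _ ≤ b := hKb.le
    have hadm1 : r ≤ R ^ (1 + δ) := by
      have h2 : R ^ ((2:ℕ):ℝ) ≤ R ^ (1+δ) :=
        Real.rpow_le_rpow_of_exponent_ge hRpos hR1 (by push_cast; linarith)
      rw [Real.rpow_natCast] at h2
      refine le_trans ?_ h2
      rw [hRdef, hrdef, ← pow_mul]
      unfold lamk
      apply half_pow_le
      have hk2 : k ≤ k ^ 2 := Nat.le_self_pow (by norm_num) k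
      omega
    have hadm2 : R ^ (1 + δ) ≤ R := by
      have := Real.rpow_le_rpow_of_exponent_ge hRpos hR1 (by linarith : (1:ℝ) ≤ 1 + δ)
      rwa [Real.rpow_one] at this
    -- counting lower bound
    have hcount : ((2:ℝ) ^ (k^2) : ℝ) ≤ (coverNumLoc ESet r R : ℝ) := by
      have hx : pk k 0 ∈ ESet := ⟨k, hk1, 0, by positivity, rfl⟩
      set T := (Finset.range (2 ^ k^2)).image (pk k) with hTdef
      have hcard : T.card = 2 ^ k^2 := by
        rw [hTdef]
        rw [Finset.card_image_of_injOn, Finset.card_range]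
        intro a _ b _ hab
        exact bp_inj (lamk_pos k) hab
      have hsub : ↑T ⊆ ESet ∩ closedBall (pk k 0) R := by
        intro v hv
        rw [hTdef, Finset.coe_image] at hv
        obtain ⟨j, hj, rfl⟩ := hv
        rw [Finset.coe_range, Set.mem_Iio] at hj
        constructor
        · exact ⟨k, hk1, j, hj, rfl⟩
        · rw [mem_closedBall]
          have hb0 : pk k 0 0 = (1/2:ℝ)^k := by
            show (1/2:ℝ)^k + (0:ℕ) * lamk k = (1/2:ℝ)^k
            push_cast; ring
          have hb1 : pk k 0 1 = 0 := by
            show 3 * lamk k * (g 0 : ℝ) = 0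
            rw [g_zero]; push_cast; ring
          have hRval : R = 2 * (1/2:ℝ)^k := by
            rw [hRdef]
            have hk' : k - 1 + 1 = k := by omega
            calc (1/2:ℝ) ^ (k-1) = 2 * ((1/2) * (1/2) ^ (k-1)) := by ring
              _ = 2 * (1/2) ^ (k - 1 + 1) := by rw [pow_succ]; ring_nf
              _ = 2 * (1/2) ^ k := by rw [hk']
          calc dist (pk k j) (pk k 0)
              ≤ |pk k j 0 - pk k 0 0| + |pk k j 1 - pk k 0 1| := dist_coords _ _
            _ ≤ 2 * (1/2:ℝ)^k := by
                rw [hb0, hb1, sub_zero]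
                have hub := pk0_ub hk1 hj
                have hlb := pk0_lb (k := k) (j := j)
                have hy1 := pk1_ub hj
                have hy0 := pk1_lb (k := k) (j := j)
                rw [abs_of_nonneg (by linarith), abs_of_nonneg hy0]
                linarith
            _ = R := hRval.symm
      have hsepT : ∀ v ∈ T, ∀ w ∈ T, v ≠ w → 2 * r < dist v w := by
        intro v hv w hw hne
        rw [hTdef, Finset.mem_image] at hv hw
        obtain ⟨jv, _, rfl⟩ := hv
        obtain ⟨jw, _, rfl⟩ := hw
        have hjj : jv ≠ jw := fun h => hne (by rw [h])
        have hgne : g jv ≠ g jw := fun h => hjj (g_strictMono.injective h)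
        have h1 : (1:ℝ) ≤ |(g jv : ℝ) - (g jw : ℝ)| := by
          rcases Nat.lt_or_ge (g jv) (g jw) with h | h
          · have h' : (g jv : ℝ) + 1 ≤ (g jw : ℝ) := by exact_mod_cast h
            rw [abs_sub_comm, abs_of_nonneg (by linarith)]
            linarith
          · have hlt : g jw < g jv := lt_of_le_of_ne h (Ne.symm hgne)
            have h' : (g jw : ℝ) + 1 ≤ (g jv : ℝ) := by exact_mod_cast hlt
            rw [abs_of_nonneg (by linarith)]
            linarith
        have hy : 3 * r * 1 ≤ |pk k jv 1 - pk k jw 1| := by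
          show 3 * r * 1 ≤ |3 * lamk k * (g jv : ℝ) - 3 * lamk k * (g jw : ℝ)|
          rw [show 3 * lamk k * (g jv : ℝ) - 3 * lamk k * (g jw : ℝ)
              = 3 * lamk k * ((g jv : ℝ) - (g jw : ℝ)) by ring, abs_mul,
            abs_of_pos (by positivity : (0:ℝ) < 3 * lamk k)]
          rw [hrdef]
          nlinarith [lamk_pos k]
        have hcd := coord1_le_dist (pk k jv) (pk k jw)
        nlinarith [lamk_pos k]
      have hccc : T.card ≤ coverNum (ESet ∩ closedBall (pk k 0) R) r := by
        apply card_le_coverNum hr.le T hsub hsepT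
        apply exists_cover ?_ hr
        exact (Metric.isBounded_closedBall).subset inter_subset_right
      have hloc := le_coverNumLoc hr ESet_bounded hx (r := r) (R := R)
      have : (2:ℕ) ^ k^2 ≤ coverNumLoc ESet r R := by
        rw [← hcard]
        exact le_trans hccc hloc
      exact_mod_cast this
    -- the bound from hbound
    have hall := hbound r R hr hadm1 hadm2 hRb
    have hRr : R / r = (2:ℝ) ^ (2*k^2+1) := by
      rw [hRdef, hrdef]
      unfold lamk
      rw [show k + 2*k^2 = (k-1) + (2*k^2+1) by omega, pow_add]
      rw [div_mul_eq_div_div, div_self (ne_of_gt (half_pow_pos (k-1))), one_div, ← inv_pow]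
      norm_num
    rw [hRr] at hall
    -- convert to rpow and contradict
    have hcast : ((2:ℝ) ^ (2*k^2+1)) ^ (β:ℝ) = (2:ℝ) ^ (((2*k^2+1 : ℕ):ℝ) * β) := by
      rw [Real.rpow_mul (by norm_num), Real.rpow_natCast]
    rw [hcast] at hall
    have hlhs : ((2:ℝ) ^ (k^2) : ℝ) = (2:ℝ) ^ ((k^2 : ℕ):ℝ) := by
      rw [Real.rpow_natCast]
    have hfinal : (2:ℝ) ^ (((k^2:ℕ):ℝ) - ((2*k^2+1:ℕ):ℝ) * β) ≤ c := by
      rw [Real.rpow_sub (by norm_num)]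
      rw [div_le_iff₀ (Real.rpow_pos_of_pos (by norm_num) _)]
      calc (2:ℝ) ^ ((k^2:ℕ):ℝ) = (2:ℝ) ^ (k^2) := by rw [Real.rpow_natCast]
        _ ≤ (coverNumLoc ESet r R : ℝ) := hcount
        _ ≤ c * (2:ℝ) ^ (((2*k^2+1:ℕ):ℝ) * β) := hall
    have hbig : c < (2:ℝ) ^ (((k^2:ℕ):ℝ) - ((2*k^2+1:ℕ):ℝ) * β) := by
      apply hKc
      push_cast
      have hkc' : ((Kc:ℝ) + 1) / ε < (k:ℝ) := lt_of_lt_of_le hkc (by exact_mod_cast hkkc)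
      have hkeps : (Kc:ℝ) + 1 < (k:ℝ) * ε := by
        rw [div_lt_iff₀ hε] at hkc'
        linarith
      have hk2 : (k:ℝ) ≤ (k:ℝ)^2 := by
        have : (1:ℝ) ≤ (k:ℝ) := by exact_mod_cast hk1
        nlinarith
      have : (k:ℝ) * ε ≤ (k:ℝ)^2 * ε := by nlinarith
      -- goal: Kc ≤ k² - (2k²+1)β = k² ε - β
      have hβ1 : β ≤ 1 := by linarith
      have hexp : (k:ℝ)^2 - (2*(k:ℝ)^2+1) * β = (k:ℝ)^2 * ε - β := by
        rw [hεdef]; ring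
      rw [hexp]
      linarith
    linarith [le_trans hbig.le hfinal]

lemma qADim_E : qADim ESet = 1/2 := by
  unfold qADim
  have himg : hUpper ESet '' Ioo (0:ℝ) 1 = {1/2} := by
    apply Subset.antisymm
    · rintro y ⟨δ, hδ, rfl⟩
      rw [mem_singleton_iff]
      exact hUpper_E hδ.1 hδ.2
    · rintro y hy
      rw [mem_singleton_iff] at hy
      exact ⟨1/2, ⟨by norm_num, by norm_num⟩, by rw [hUpper_E (by norm_num) (by norm_num), hy]⟩
  rw [himg, csSup_singleton]

/-! ### the projected set F -/

def FSet : Set ℝ := (fun p : E2 => p 0) '' ESet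

lemma FSet_mem {y : ℝ} :
    y ∈ FSet ↔ ∃ k, 1 ≤ k ∧ ∃ j : ℕ, j < 2 ^ k ^ 2 ∧ y = (1/2:ℝ) ^ k + (j:ℝ) * lamk k := by
  constructor
  · rintro ⟨v, ⟨k, hk, j, hj, rfl⟩, rfl⟩
    exact ⟨k, hk, j, hj, rfl⟩
  · rintro ⟨k, hk, j, hj, rfl⟩
    exact ⟨pk k j, ⟨k, hk, j, hj, rfl⟩, rfl⟩


lemma FSet_bounded : Bornology.IsBounded FSet := by
  apply (Metric.isBounded_closedBall (x := (0:ℝ)) (r := 2)).subset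
  rintro y ⟨v, hv, rfl⟩
  obtain ⟨k, hk, j, hj, rfl⟩ := hv
  rw [mem_closedBall, Real.dist_eq, sub_zero]
  have h1 : pk k j 0 ≤ (3/2 : ℝ) * (1/2) ^ k := pk0_ub hk hj
  have h2 : (1/2:ℝ) ^ k ≤ 1 := by
    calc (1/2:ℝ) ^ k ≤ (1/2:ℝ) ^ 0 := half_pow_le (Nat.zero_le k)
      _ = 1 := by norm_num
  have h0 : (0:ℝ) ≤ pk k j 0 := le_trans (half_pow_pos k).le pk0_lb
  rw [abs_of_nonneg h0]
  nlinarith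

lemma FSet_nonempty : FSet.Nonempty :=
  ⟨(1/2:ℝ) + 0 * lamk 1, FSet_mem.mpr ⟨1, le_refl 1, 0, by norm_num, by norm_num⟩⟩

lemma coverNum_interval {A : Set ℝ} {x r R : ℝ} (hr : 0 < r) (hR : 0 < R)
    (hA : A ⊆ closedBall x R) : (coverNum A r : ℝ) ≤ R / r + 1 := by
  classical
  set N := ⌊R / r⌋₊ + 1 with hNdef
  have h2r : (0:ℝ) < 2 * r := by linarith
  have hcov : A ⊆ ⋃ c ∈ (Finset.range N).image (fun i : ℕ => x - R + r + 2*r*i),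
      closedBall c r := by
    intro y hy
    have hyx : |y - x| ≤ R := by
      have := hA hy
      rw [mem_closedBall, Real.dist_eq] at this
      exact this
    obtain ⟨hy1, hy2⟩ := abs_le.mp hyx
    set i := ⌊(y - (x - R)) / (2*r)⌋₊ with hidef
    have hz0 : 0 ≤ y - (x - R) := by linarith
    have hi1 : (i:ℝ) ≤ (y - (x-R))/(2*r) := Nat.floor_le (by positivity)
    have hi2 : (y - (x-R))/(2*r) < i + 1 := Nat.lt_floor_add_one _
    have hiN : i < N := by
      have hle : (y - (x-R))/(2*r) ≤ R/r := by
        rw [div_le_div_iff₀ h2r hr]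
        nlinarith
      have : i ≤ ⌊R/r⌋₊ := by
        rw [hidef]
        exact Nat.floor_le_floor (le_trans (le_refl _) hle)
      omega
    refine mem_iUnion₂.mpr ⟨x - R + r + 2*r*i, Finset.mem_image.mpr
      ⟨i, Finset.mem_range.mpr hiN, rfl⟩, ?_⟩
    rw [mem_closedBall, Real.dist_eq, abs_le]
    have hmul1 : (i:ℝ) * (2*r) ≤ y - (x-R) := (le_div_iff₀ h2r).mp hi1
    have hmul2 : y - (x-R) < ((i:ℝ) + 1) * (2*r) := (div_lt_iff₀ h2r).mp hi2
    constructor <;> nlinarith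
  have hcard : ((Finset.range N).image (fun i : ℕ => x - R + r + 2*r*i)).card ≤ N :=
    le_trans Finset.card_image_le (le_of_eq (Finset.card_range N))
  have h1 : coverNum A r ≤ N := le_trans (coverNum_le_card _ hcov) hcard
  calc (coverNum A r : ℝ) ≤ (N : ℝ) := by exact_mod_cast h1
    _ = (⌊R / r⌋₊ : ℝ) + 1 := by rw [hNdef]; push_cast; ring
    _ ≤ R / r + 1 := by
        have := Nat.floor_le (show (0:ℝ) ≤ R/r by positivity)
        linarith

lemma coverNumLoc_F {r R : ℝ} (hr : 0 < r) (hR : 0 < R) :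
    (coverNumLoc FSet r R : ℝ) ≤ R / r + 1 := by
  apply coverNumLoc_le (by positivity)
  intro x _
  exact coverNum_interval hr hR inter_subset_right

lemma half_pow_rpow (a : ℕ) (y : ℝ) : ((1/2:ℝ) ^ a) ^ y = (2:ℝ) ^ (-(a:ℝ) * y) := by
  rw [half_pow_eq_rpow, ← Real.rpow_mul (by norm_num : (0:ℝ) ≤ 2)]

set_option maxHeartbeats 1000000 in
lemma hUpper_F {δ : ℝ} (hδ0 : 0 < δ) (hδ1 : δ < 1) : hUpper FSet δ = 1 := by
  classical
  have hmem : ∀ α : ℝ, 1 ≤ α → α ∈ {α : ℝ | 0 ≤ α ∧ ∃ b c : ℝ, 0 < b ∧ 0 < c ∧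
      ∀ r R : ℝ, 0 < r → r ≤ R ^ (1 + δ) → R ^ (1 + δ) ≤ R → R ≤ b →
      (coverNumLoc FSet r R : ℝ) ≤ c * (R / r) ^ α} := by
    intro α hα
    refine ⟨by linarith, 1, 2, one_pos, by norm_num, ?_⟩
    intro r R hr hrR1 hR1 _hRb
    have hRpos : 0 < R := R_pos hr hrR1 hR1
    have hrR : r ≤ R := le_trans hrR1 hR1
    have hRr1 : (1:ℝ) ≤ R / r := by rw [le_div_iff₀ hr]; linarith
    calc (coverNumLoc FSet r R : ℝ) ≤ R/r + 1 := coverNumLoc_F hr hRpos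
      _ ≤ 2 * (R/r) := by linarith
      _ = 2 * (R/r) ^ (1:ℝ) := by rw [Real.rpow_one]
      _ ≤ 2 * (R/r) ^ α := by
          apply mul_le_mul_of_nonneg_left ?_ (by norm_num)
          exact Real.rpow_le_rpow_of_exponent_le hRr1 hα
  apply le_antisymm
  · exact csInf_le ⟨0, fun β hβ => hβ.1⟩ (hmem 1 (le_refl _))
  · apply le_csInf ⟨1, hmem 1 (le_refl _)⟩
    rintro β ⟨hβ0, b, c, hb, hc, hbound⟩
    by_contra hlt
    push_neg at hlt
    set ε : ℝ := 1 - β with hεdef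
    have hε : 0 < ε := by simp only [hεdef]; linarith
    obtain ⟨Kb, hKb⟩ : ∃ n : ℕ, (1/2:ℝ) ^ n < b := exists_pow_lt_of_lt_one hb (by norm_num)
    obtain ⟨Kc, hKc⟩ := exists_rpow_big (3 * c)
    obtain ⟨kc, hkc⟩ := exists_nat_gt (((Kc:ℝ) + 1) / ε)
    obtain ⟨kd, hkd⟩ := exists_nat_gt (δ / (1 - δ))
    set k := max (Kb + 1) (max (max kc kd) 1) with hkdef
    have hk1 : 1 ≤ k := le_trans (le_max_right _ 1) (le_max_right _ _)
    have hkKb : Kb + 1 ≤ k := le_max_left _ _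
    have hkkc : kc ≤ k := le_trans (le_trans (le_max_left kc kd) (le_max_left _ 1))
      (le_max_right _ _)
    have hkkd : kd ≤ k := le_trans (le_trans (le_max_right kc kd) (le_max_left _ 1))
      (le_max_right _ _)
    set r : ℝ := lamk k / 3 with hrdef
    set R : ℝ := (1/2:ℝ) ^ (k + k^2) with hRdef
    have hr : 0 < r := by
      rw [hrdef]
      have := lamk_pos k
      linarith
    have hRpos : 0 < R := half_pow_pos _
    have hR1 : R ≤ 1 := by
      calc R ≤ (1/2:ℝ) ^ 0 := half_pow_le (Nat.zero_le _)
        _ = 1 := by norm_num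
    have hRb : R ≤ b := by
      calc R ≤ (1/2:ℝ) ^ Kb := half_pow_le (by nlinarith [hkKb])
        _ ≤ b := hKb.le
    have hdelta : δ * ((k:ℝ) + (k:ℝ)^2) ≤ (k:ℝ)^2 := by
      have hkd' : δ / (1 - δ) < (k:ℝ) := lt_of_lt_of_le hkd (by exact_mod_cast hkkd)
      have h1δ : 0 < 1 - δ := by linarith
      rw [div_lt_iff₀ h1δ] at hkd'
      have hk0 : (1:ℝ) ≤ (k:ℝ) := by exact_mod_cast hk1
      nlinarith
    have hadm1 : r ≤ R ^ (1 + δ) := by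
      rw [hRdef, half_pow_rpow]
      have hstep : (2:ℝ) ^ (-(((k + 2*k^2 : ℕ)):ℝ)) ≤ (2:ℝ) ^ (-(((k + k^2:ℕ)):ℝ) * (1+δ)) := by
        apply (Real.rpow_le_rpow_left_iff (by norm_num : (1:ℝ) < 2)).mpr
        push_cast
        nlinarith [hdelta]
      calc r ≤ lamk k := by rw [hrdef]; nlinarith [lamk_pos k]
        _ = (2:ℝ) ^ (-(((k + 2*k^2 : ℕ)):ℝ)) := by
            unfold lamk
            rw [half_pow_eq_rpow]
        _ ≤ _ := hstep
    have hadm2 : R ^ (1 + δ) ≤ R := by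
      have := Real.rpow_le_rpow_of_exponent_ge hRpos hR1 (by linarith : (1:ℝ) ≤ 1 + δ)
      rwa [Real.rpow_one] at this
    -- counting lower bound
    have hcount : ((2:ℝ) ^ (k^2) : ℝ) ≤ (coverNumLoc FSet r R : ℝ) := by
      set q0 : ℝ := (1/2:ℝ) ^ k + (0:ℕ) * lamk k with hq0def
      have hx : q0 ∈ FSet := FSet_mem.mpr ⟨k, hk1, 0, by positivity, rfl⟩
      set f : ℕ → ℝ := fun j => (1/2:ℝ) ^ k + j * lamk k with hfdef
      set T := (Finset.range (2 ^ k^2)).image f with hTdef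
      have hfinj : ∀ a b : ℕ, f a = f b → a = b := by
        intro a b hab
        rw [hfdef] at hab
        simp only [add_right_inj] at hab
        have h2 := mul_right_cancel₀ (ne_of_gt (lamk_pos k)) hab
        exact_mod_cast h2
      have hcard : T.card = 2 ^ k^2 := by
        rw [hTdef, Finset.card_image_of_injOn, Finset.card_range]
        intro a _ b _ hab
        exact hfinj a b hab
      have hsub : ↑T ⊆ FSet ∩ closedBall q0 R := by
        intro y hy
        rw [hTdef, Finset.coe_image] at hy
        obtain ⟨j, hj, rfl⟩ := hy
        rw [Finset.coe_range, Set.mem_Iio] at hj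
        constructor
        · exact FSet_mem.mpr ⟨k, hk1, j, hj, rfl⟩
        · rw [mem_closedBall, Real.dist_eq, hfdef, hq0def]
          have hlam := lamk_pos k
          have hjR : (j:ℝ) * lamk k ≤ R := by
            have hjle : (j:ℝ) ≤ 2 ^ k^2 := by
              have : (j:ℝ) + 1 ≤ ((2:ℝ)) ^ k^2 := by exact_mod_cast hj
              linarith
            calc (j:ℝ) * lamk k ≤ (2:ℝ) ^ k^2 * lamk k := by nlinarith
              _ = R := by rw [mul_comm, hRdef]; exact lam2m k
          rw [show (1/2:ℝ) ^ k + (j:ℝ) * lamk k - ((1/2:ℝ) ^ k + (0:ℕ) * lamk k)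
              = (j:ℝ) * lamk k by push_cast; ring]
          rw [abs_of_nonneg (by positivity)]
          exact hjR
      have hsepT : ∀ v ∈ T, ∀ w ∈ T, v ≠ w → 2 * r < dist v w := by
        intro v hv w hw hne
        rw [hTdef, Finset.mem_image] at hv hw
        obtain ⟨jv, _, rfl⟩ := hv
        obtain ⟨jw, _, rfl⟩ := hw
        have hjj : jv ≠ jw := fun h => hne (by rw [h])
        have hlam := lamk_pos k
        have h1 : (1:ℝ) ≤ |(jv:ℝ) - (jw:ℝ)| := by
          rcases Nat.lt_or_ge jv jw with h | h
          · have h' : (jv : ℝ) + 1 ≤ (jw : ℝ) := by exact_mod_cast h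
            rw [abs_sub_comm, abs_of_nonneg (by linarith)]
            linarith
          · have hlt : jw < jv := lt_of_le_of_ne h (Ne.symm hjj)
            have h' : (jw : ℝ) + 1 ≤ (jv : ℝ) := by exact_mod_cast hlt
            rw [abs_of_nonneg (by linarith)]
            linarith
        rw [Real.dist_eq, hfdef]
        rw [show (1/2:ℝ) ^ k + (jv:ℝ) * lamk k - ((1/2:ℝ) ^ k + (jw:ℝ) * lamk k)
            = ((jv:ℝ) - (jw:ℝ)) * lamk k by ring, abs_mul, abs_of_pos hlam]
        rw [hrdef]
        nlinarith
      have hccc : T.card ≤ coverNum (FSet ∩ closedBall q0 R) r := by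
        apply card_le_coverNum hr.le T hsub hsepT
        apply exists_cover ?_ hr
        exact (Metric.isBounded_closedBall).subset inter_subset_right
      have hloc := le_coverNumLoc hr FSet_bounded hx (r := r) (R := R)
      have hfin : (2:ℕ) ^ k^2 ≤ coverNumLoc FSet r R := by
        rw [← hcard]
        exact le_trans hccc hloc
      exact_mod_cast hfin
    have hall := hbound r R hr hadm1 hadm2 hRb
    have hRr : R / r = 3 * (2:ℝ) ^ (k^2) := by
      have hlam : lamk k = R * (1/2:ℝ) ^ (k^2) := by
        rw [hRdef, ← pow_add]
        unfold lamk
        congr 1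
        ring
      rw [div_eq_iff (ne_of_gt hr), hrdef, hlam]
      rw [show (3:ℝ) * 2^(k^2) * (R * (1/2:ℝ)^(k^2) / 3)
          = R * ((2:ℝ) * (1/2:ℝ))^(k^2) by rw [mul_pow]; ring]
      norm_num
    rw [hRr] at hall
    have h3b : (3 * (2:ℝ) ^ (k^2)) ^ (β:ℝ) = (3:ℝ) ^ (β:ℝ) * ((2:ℝ) ^ (k^2)) ^ (β:ℝ) :=
      Real.mul_rpow (by norm_num) (by positivity)
    have h3β : (3:ℝ) ^ (β:ℝ) ≤ 3 := by
      calc (3:ℝ) ^ (β:ℝ) ≤ (3:ℝ) ^ (1:ℝ) :=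
          Real.rpow_le_rpow_of_exponent_le (by norm_num) (by linarith)
        _ = 3 := Real.rpow_one 3
    have h2β : ((2:ℝ) ^ (k^2)) ^ (β:ℝ) = (2:ℝ) ^ (((k^2:ℕ):ℝ) * β) := by
      rw [← Real.rpow_natCast 2 (k^2), ← Real.rpow_mul (by norm_num)]
    have h2βpos : (0:ℝ) < (2:ℝ) ^ (((k^2:ℕ):ℝ) * β) := Real.rpow_pos_of_pos (by norm_num) _
    have hchain : (2:ℝ) ^ (((k^2:ℕ):ℝ)) ≤ 3 * c * (2:ℝ) ^ ((((k^2:ℕ)):ℝ) * β) := by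
      rw [Real.rpow_natCast]
      calc (2:ℝ) ^ (k^2) ≤ (coverNumLoc FSet r R : ℝ) := hcount
        _ ≤ c * (3 * (2:ℝ) ^ (k^2)) ^ (β:ℝ) := hall
        _ = c * ((3:ℝ) ^ (β:ℝ) * (2:ℝ) ^ (((k^2:ℕ):ℝ) * β)) := by rw [h3b, h2β]
        _ ≤ 3 * c * (2:ℝ) ^ (((k^2:ℕ):ℝ) * β) := by
            have h2bp : (0:ℝ) ≤ (2:ℝ) ^ (((k^2:ℕ):ℝ) * β) :=
              (Real.rpow_pos_of_pos (by norm_num) _).le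
            have hstep : c * ((3:ℝ) ^ (β:ℝ)) * ((2:ℝ) ^ (((k^2:ℕ):ℝ) * β))
                ≤ c * 3 * ((2:ℝ) ^ (((k^2:ℕ):ℝ) * β)) :=
              mul_le_mul_of_nonneg_right (mul_le_mul_of_nonneg_left h3β hc.le) h2bp
            nlinarith [hstep]
    have hfinal : (2:ℝ) ^ ((((k^2:ℕ)):ℝ) - (((k^2:ℕ)):ℝ) * β) ≤ 3 * c := by
      rw [Real.rpow_sub (by norm_num), div_le_iff₀ h2βpos]
      exact hchain
    have hbig : 3 * c < (2:ℝ) ^ ((((k^2:ℕ)):ℝ) - (((k^2:ℕ)):ℝ) * β) := by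
      apply hKc
      push_cast
      have hkc' : ((Kc:ℝ) + 1) / ε < (k:ℝ) := lt_of_lt_of_le hkc (by exact_mod_cast hkkc)
      have hkeps : (Kc:ℝ) + 1 < (k:ℝ) * ε := by
        rw [div_lt_iff₀ hε] at hkc'
        linarith
      have hk2 : (k:ℝ) ≤ (k:ℝ)^2 := by
        have : (1:ℝ) ≤ (k:ℝ) := by exact_mod_cast hk1
        nlinarith
      have hexp : (k:ℝ)^2 - (k:ℝ)^2 * β = (k:ℝ)^2 * ε := by rw [hεdef]; ring
      rw [hexp]
      nlinarith
    linarith [le_trans hbig.le hfinal]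

lemma qADim_F : qADim FSet = 1 := by
  unfold qADim
  have himg : hUpper FSet '' Ioo (0:ℝ) 1 = {1} := by
    apply Subset.antisymm
    · rintro y ⟨δ, hδ, rfl⟩
      rw [mem_singleton_iff]
      exact hUpper_F hδ.1 hδ.2
    · rintro y hy
      rw [mem_singleton_iff] at hy
      exact ⟨1/2, ⟨by norm_num, by norm_num⟩, by rw [hUpper_F (by norm_num) (by norm_num), hy]⟩
  rw [himg, csSup_singleton]

end QAP

/-- There is a bounded planar set whose quasi-Assouad dimension is `1/2` while its orthogonal
projection onto the first coordinate axis has quasi-Assouad dimension `1`; in particular, the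
quasi-Assouad dimension can increase under a Lipschitz map. -/
theorem exists_set_qADim_increases_under_projection :
    ∃ E : Set (EuclideanSpace ℝ (Fin 2)), Bornology.IsBounded E ∧
      qADim E = 1 / 2 ∧
      qADim ((fun p : EuclideanSpace ℝ (Fin 2) => p 0) '' E) = 1 :=
  ⟨QAP.ESet, QAP.ESet_bounded, QAP.qADim_E, QAP.qADim_F⟩
end
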